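/- arXiv:1509.03380 — 5 statements merged into one kernel-verified Lean document; each statement's English description precedes it below -/
import Mathlib

section
/- For a vertex v = (a,b) of the triangulated product Δ, let M_v be the matrix over ℚ whose rows are indexed by the edges r of Δ containing v, whose columns are indexed by the vertices w of Δ, and whose (r,w) entry is Div(1_w)(r), where 1_w is the indicator function of w. Then the rank of M_v over ℚ equals the number of diagonal edges of Δ containing v, plus 2. -/
open scoped Classical
open Finset

section TriangulatedProduct

variable {VG VH : Type*}

/-- The column of the Laplacian matrix of `G` indexed by the vertex `w`:
its entry at `v` is `-deg v` if `v = w`, `1` if `v` is adjacent to `w`, and `0` otherwise. -/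
noncomputable def lapCol (G : SimpleGraph VG) [Fintype VG] (w v : VG) : ℤ :=
  if v = w then -(((Finset.univ.filter (fun u => G.Adj v u)).card : ℤ))
  else if G.Adj v w then 1 else 0

/-- A divisor on a finite graph is principal if it lies in the ℤ-span of the
columns of the Laplacian matrix of the graph. -/
def GraphPrincipal (G : SimpleGraph VG) [Fintype VG] (D : VG → ℤ) : Prop :=
  ∃ f : VG → ℤ, ∀ v, D v = ∑ w, f w * lapCol G w v

/-- A triangulated product of the graphs `G` and `H`: for each square
(an edge `aa'` of `G` together with an edge `bb'` of `H`) exactly one of the two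
possible diagonals `{(a,b),(a',b')}`, `{(a,b'),(a',b)}` is chosen.  The structure
records the resulting symmetric "diagonal edge" relation. -/
structure TriProd (G : SimpleGraph VG) (H : SimpleGraph VH) where
  diag : VG × VH → VG × VH → Prop
  diag_symm : ∀ u v, diag u v → diag v u
  diag_adj : ∀ a a' b b', diag (a, b) (a', b') → G.Adj a a' ∧ H.Adj b b'
  diag_choice : ∀ a a' b b', G.Adj a a' → H.Adj b b' →
    (diag (a, b) (a', b') ∧ ¬ diag (a, b') (a', b)) ∨
    (¬ diag (a, b) (a', b') ∧ diag (a, b') (a', b))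

namespace TriProd

variable {G : SimpleGraph VG} {H : SimpleGraph VH}

/-- `u` and `v` form an edge of the triangulated product: a horizontal edge,
a vertical edge, or a diagonal edge. -/
def Adj (T : TriProd G H) (u v : VG × VH) : Prop :=
  (u.2 = v.2 ∧ G.Adj u.1 v.1) ∨ (u.1 = v.1 ∧ H.Adj u.2 v.2) ∨ T.diag u v

/-- `{u, v, w}` is a triangle (2-face) of the triangulated product. -/
def IsFace (T : TriProd G H) (u v w : VG × VH) : Prop :=
  ∃ a a' b b', T.diag (a, b) (a', b') ∧
    ({u, v, w} : Finset (VG × VH)) = {(a, b), (a', b'), (a', b)}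

/-- `{u, v, w}` is a triangle of the triangulated product whose diagonal edge
does not contain the vertex `x`. -/
def IsFaceAvoiding (T : TriProd G H) (u v w x : VG × VH) : Prop :=
  ∃ a a' b b', T.diag (a, b) (a', b') ∧
    ({u, v, w} : Finset (VG × VH)) = {(a, b), (a', b'), (a', b)} ∧
    x ≠ (a, b) ∧ x ≠ (a', b')

variable [Fintype VG] [Fintype VH]

/-- The structure constant `α(e, x)` for the edge `e = {u, v}` of the
triangulated product and the vertex `x`. -/
noncomputable def alpha (T : TriProd G H) (u v x : VG × VH) : ℤ :=
  if x = u ∨ x = v then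
    (if T.diag u v then 1
     else ((Finset.univ.filter (fun w => T.IsFaceAvoiding u v w x)).card : ℤ))
  else 0

/-- The divisor of the function `φ`, evaluated at the edge `{u, v}` of the
triangulated product: the sum of `φ` over the third vertices of the triangles
containing `{u, v}`, minus `α({u,v},u) φ(u) + α({u,v},v) φ(v)`. -/
noncomputable def Div (T : TriProd G H) (φ : VG × VH → ℤ) (u v : VG × VH) : ℤ :=
  (∑ w ∈ Finset.univ.filter (fun w => T.IsFace u v w), φ w)
    - (T.alpha u v u * φ u + T.alpha u v v * φ v)

/-- A divisor on the triangulated product (a function on edges, encoded as a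
function on ordered pairs of vertices) is principal if it agrees with `Div φ`
on every edge, for some `φ`. -/
def Principal (T : TriProd G H) (D : VG × VH → VG × VH → ℤ) : Prop :=
  ∃ φ : VG × VH → ℤ, ∀ u v, T.Adj u v → D u v = T.Div φ u v

/-- A divisor on the triangulated product is Cartier if near every vertex `x`
it agrees with a principal divisor on all edges containing `x`. -/
def Cartier (T : TriProd G H) (D : VG × VH → VG × VH → ℤ) : Prop :=
  ∀ x : VG × VH, ∃ φ : VG × VH → ℤ,
    ∀ u v, T.Adj u v → (x = u ∨ x = v) → D u v = T.Div φ u v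

/-- A divisor is ℚ-Cartier if some nonzero integer multiple of it is Cartier. -/
def QCartier (T : TriProd G H) (D : VG × VH → VG × VH → ℤ) : Prop :=
  ∃ m : ℤ, m ≠ 0 ∧ T.Cartier (fun u v => m * D u v)

/-- The balancing conditions for a divisor `D` on the triangulated product. -/
def Balanced (T : TriProd G H) (D : VG × VH → VG × VH → ℤ) : Prop :=
  ∀ a : VG, ∀ b : VH,
    (∀ x x' : VG, G.Adj a x → G.Adj a x' →
      (∑ c ∈ Finset.univ.filter (fun c : VH => T.Adj (a, b) (x, c)), D (a, b) (x, c)) =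
      (∑ c ∈ Finset.univ.filter (fun c : VH => T.Adj (a, b) (x', c)), D (a, b) (x', c))) ∧
    (∀ y y' : VH, H.Adj b y → H.Adj b y' →
      (∑ c ∈ Finset.univ.filter (fun c : VG => T.Adj (a, b) (c, y)), D (a, b) (c, y)) =
      (∑ c ∈ Finset.univ.filter (fun c : VG => T.Adj (a, b) (c, y')), D (a, b) (c, y')))

end TriProd

/-- The map `β` sending a pair of divisors on `G` and `H` to a divisor on the
triangulated product: `C(a)` on vertical edges `{(a,b),(a,b')}`, `D(b)` on
horizontal edges `{(a,b),(a',b)}`, and `0` on diagonal edges. -/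
noncomputable def beta (C : VG → ℤ) (D : VH → ℤ) (u v : VG × VH) : ℤ :=
  if u.1 = v.1 then C u.1 else if u.2 = v.2 then D u.2 else 0

end TriangulatedProduct

section RankAux

variable {VG VH : Type*} {G : SimpleGraph VG} {H : SimpleGraph VH}

private lemma prod_eq_fst' {p : VG × VH} {a : VG} {b : VH} (h : p = (a,b)) : p.1 = a :=
  congrArg Prod.fst h

private lemma prod_eq_snd' {p : VG × VH} {a : VG} {b : VH} (h : p = (a,b)) : p.2 = b :=
  congrArg Prod.snd h

private lemma triple_horiz' {v u w : VG × VH} {a a' : VG} {b b' : VH}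
    (nbb : b ≠ b') (h2 : v.2 = u.2) (h1 : v.1 ≠ u.1)
    (heq : ({v, u, w} : Finset (VG × VH)) = {(a, b), (a', b'), (a', b)}) :
    (v = (a, b) ∧ u = (a', b) ∧ w = (a', b')) ∨
    (v = (a', b) ∧ u = (a, b) ∧ w = (a', b')) := by
  have hv : v ∈ ({(a, b), (a', b'), (a', b)} : Finset (VG × VH)) := heq ▸ (by simp)
  have hu : u ∈ ({(a, b), (a', b'), (a', b)} : Finset (VG × VH)) := heq ▸ (by simp)
  have hQ : (a', b') ∈ ({v, u, w} : Finset (VG × VH)) := heq ▸ (by simp)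
  simp only [Finset.mem_insert, Finset.mem_singleton] at hv hu hQ
  rcases hv with hv | hv | hv <;> rcases hu with hu | hu | hu
  · exact absurd ((prod_eq_fst' hv).trans (prod_eq_fst' hu).symm) h1
  · exact absurd (((prod_eq_snd' hv).symm.trans h2).trans (prod_eq_snd' hu)) nbb
  · left
    refine ⟨hv, hu, ?_⟩
    rcases hQ with hQ | hQ | hQ
    · exact absurd (prod_eq_snd' (hQ.trans hv)) (Ne.symm nbb)
    · exact absurd (prod_eq_snd' (hQ.trans hu)) (Ne.symm nbb)
    · exact hQ.symm
  · exact absurd (((prod_eq_snd' hv).symm.trans h2).trans (prod_eq_snd' hu)).symm nbb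
  · exact absurd ((prod_eq_fst' hv).trans (prod_eq_fst' hu).symm) h1
  · exact absurd (((prod_eq_snd' hv).symm.trans h2).trans (prod_eq_snd' hu)).symm nbb
  · right
    refine ⟨hv, hu, ?_⟩
    rcases hQ with hQ | hQ | hQ
    · exact absurd (prod_eq_snd' (hQ.trans hv)) (Ne.symm nbb)
    · exact absurd (prod_eq_snd' (hQ.trans hu)) (Ne.symm nbb)
    · exact hQ.symm
  · exact absurd (((prod_eq_snd' hv).symm.trans h2).trans (prod_eq_snd' hu)) nbb
  · exact absurd ((prod_eq_fst' hv).trans (prod_eq_fst' hu).symm) h1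

private lemma triple_vert' {v u w : VG × VH} {a a' : VG} {b b' : VH}
    (nab : a ≠ a') (h1 : v.1 = u.1) (h2 : v.2 ≠ u.2)
    (heq : ({v, u, w} : Finset (VG × VH)) = {(a, b), (a', b'), (a', b)}) :
    (v = (a', b') ∧ u = (a', b) ∧ w = (a, b)) ∨
    (v = (a', b) ∧ u = (a', b') ∧ w = (a, b)) := by
  have hv : v ∈ ({(a, b), (a', b'), (a', b)} : Finset (VG × VH)) := heq ▸ (by simp)
  have hu : u ∈ ({(a, b), (a', b'), (a', b)} : Finset (VG × VH)) := heq ▸ (by simp)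
  have hP : (a, b) ∈ ({v, u, w} : Finset (VG × VH)) := heq ▸ (by simp)
  simp only [Finset.mem_insert, Finset.mem_singleton] at hv hu hP
  rcases hv with hv | hv | hv <;> rcases hu with hu | hu | hu
  · exact absurd ((prod_eq_snd' hv).trans (prod_eq_snd' hu).symm) h2
  · exact absurd (((prod_eq_fst' hv).symm.trans h1).trans (prod_eq_fst' hu)) nab
  · exact absurd (((prod_eq_fst' hv).symm.trans h1).trans (prod_eq_fst' hu)) nab
  · exact absurd (((prod_eq_fst' hv).symm.trans h1).trans (prod_eq_fst' hu)).symm nab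
  · exact absurd ((prod_eq_snd' hv).trans (prod_eq_snd' hu).symm) h2
  · left
    refine ⟨hv, hu, ?_⟩
    rcases hP with hP | hP | hP
    · exact absurd (prod_eq_fst' (hP.trans hv)) nab
    · exact absurd (prod_eq_fst' (hP.trans hu)) nab
    · exact hP.symm
  · exact absurd (((prod_eq_fst' hv).symm.trans h1).trans (prod_eq_fst' hu)).symm nab
  · right
    refine ⟨hv, hu, ?_⟩
    rcases hP with hP | hP | hP
    · exact absurd (prod_eq_fst' (hP.trans hv)) nab
    · exact absurd (prod_eq_fst' (hP.trans hu)) nab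
    · exact hP.symm
  · exact absurd ((prod_eq_snd' hv).trans (prod_eq_snd' hu).symm) h2

private lemma triple_diag' {v u w : VG × VH} {a a' : VG} {b b' : VH}
    (nab : a ≠ a') (nbb : b ≠ b') (h1 : v.1 ≠ u.1) (h2 : v.2 ≠ u.2)
    (heq : ({v, u, w} : Finset (VG × VH)) = {(a, b), (a', b'), (a', b)}) :
    (v = (a, b) ∧ u = (a', b') ∧ w = (a', b)) ∨
    (v = (a', b') ∧ u = (a, b) ∧ w = (a', b)) := by
  have hv : v ∈ ({(a, b), (a', b'), (a', b)} : Finset (VG × VH)) := heq ▸ (by simp)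
  have hu : u ∈ ({(a, b), (a', b'), (a', b)} : Finset (VG × VH)) := heq ▸ (by simp)
  have hR : (a', b) ∈ ({v, u, w} : Finset (VG × VH)) := heq ▸ (by simp)
  simp only [Finset.mem_insert, Finset.mem_singleton] at hv hu hR
  rcases hv with hv | hv | hv <;> rcases hu with hu | hu | hu
  · exact absurd ((prod_eq_fst' hv).trans (prod_eq_fst' hu).symm) h1
  · left
    refine ⟨hv, hu, ?_⟩
    rcases hR with hR | hR | hR
    · exact absurd (prod_eq_fst' (hR.trans hv)) (Ne.symm nab)
    · exact absurd (prod_eq_snd' (hR.trans hu)) nbb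
    · exact hR.symm
  · exact absurd ((prod_eq_snd' hv).trans (prod_eq_snd' hu).symm) h2
  · right
    refine ⟨hv, hu, ?_⟩
    rcases hR with hR | hR | hR
    · exact absurd (prod_eq_snd' (hR.trans hv)) nbb
    · exact absurd (prod_eq_fst' (hR.trans hu)) (Ne.symm nab)
    · exact hR.symm
  · exact absurd ((prod_eq_snd' hv).trans (prod_eq_snd' hu).symm) h2
  · exact absurd ((prod_eq_fst' hv).trans (prod_eq_fst' hu).symm) h1
  · exact absurd ((prod_eq_snd' hv).trans (prod_eq_snd' hu).symm) h2
  · exact absurd ((prod_eq_fst' hv).trans (prod_eq_fst' hu).symm) h1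
  · exact absurd ((prod_eq_snd' hv).trans (prod_eq_snd' hu).symm) h2

private lemma exists_nbr {V : Type*} {G : SimpleGraph V} (hc : G.Connected)
    (he : ∃ a b, G.Adj a b) (x : V) : ∃ y, G.Adj x y := by
  obtain ⟨a, b, hab⟩ := he
  rcases eq_or_ne x a with rfl | hxa
  · exact ⟨b, hab⟩
  · obtain ⟨p⟩ := hc.preconnected x a
    cases p with
    | nil => exact absurd rfl hxa
    | cons h _ => exact ⟨_, h⟩

namespace TriProd

variable (T : TriProd G H)

lemma diag_adj' {u w : VG × VH} (h : T.diag u w) : G.Adj u.1 w.1 ∧ H.Adj u.2 w.2 := by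
  have := T.diag_adj u.1 w.1 u.2 w.2
  simp only [Prod.mk.eta] at this
  exact this h

lemma not_diag_of_eq_snd {v u : VG × VH} (h2 : v.2 = u.2) : ¬ T.diag v u := fun h =>
  (T.diag_adj' h).2.ne h2

lemma not_diag_of_eq_fst {v u : VG × VH} (h1 : v.1 = u.1) : ¬ T.diag v u := fun h =>
  (T.diag_adj' h).1.ne h1

lemma face_horiz {v u : VG × VH} (h2 : v.2 = u.2) (h1 : G.Adj v.1 u.1) (w : VG × VH) :
    T.IsFace v u w ↔
      (∃ y, T.diag v (u.1, y) ∧ w = (u.1, y)) ∨ (∃ y, T.diag u (v.1, y) ∧ w = (v.1, y)) := by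
  constructor
  · rintro ⟨a, a', b, b', hd, heq⟩
    obtain ⟨hGa, hHb⟩ := T.diag_adj a a' b b' hd
    rcases triple_horiz' hHb.ne h2 h1.ne heq with ⟨hv, hu, hw⟩ | ⟨hv, hu, hw⟩
    · left
      exact ⟨b', by rw [hv, prod_eq_fst' hu]; exact hd, by rw [prod_eq_fst' hu]; exact hw⟩
    · right
      exact ⟨b', by rw [hu, prod_eq_fst' hv]; exact hd, by rw [prod_eq_fst' hv]; exact hw⟩
  · rintro (⟨y, hd, rfl⟩ | ⟨y, hd, rfl⟩)
    · refine ⟨v.1, u.1, v.2, y, hd, ?_⟩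
      have e2 : (u.1, v.2) = u := by rw [h2]
      rw [Prod.mk.eta, e2]
      ext p
      simp only [Finset.mem_insert, Finset.mem_singleton]
      tauto
    · refine ⟨u.1, v.1, u.2, y, hd, ?_⟩
      have e2 : (v.1, u.2) = v := by rw [← h2]
      rw [Prod.mk.eta, e2]
      ext p
      simp only [Finset.mem_insert, Finset.mem_singleton]
      tauto

lemma face_vert {v u : VG × VH} (h1 : v.1 = u.1) (h2 : H.Adj v.2 u.2) (w : VG × VH) :
    T.IsFace v u w ↔
      (∃ x, T.diag v (x, u.2) ∧ w = (x, u.2)) ∨ (∃ x, T.diag u (x, v.2) ∧ w = (x, v.2)) := by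
  constructor
  · rintro ⟨a, a', b, b', hd, heq⟩
    obtain ⟨hGa, hHb⟩ := T.diag_adj a a' b b' hd
    rcases triple_vert' hGa.ne h1 h2.ne heq with ⟨hv, hu, hw⟩ | ⟨hv, hu, hw⟩
    · left
      refine ⟨a, ?_, by rw [prod_eq_snd' hu]; exact hw⟩
      rw [prod_eq_snd' hu]
      exact T.diag_symm _ _ (hv ▸ hd)
    · right
      refine ⟨a, ?_, by rw [prod_eq_snd' hv]; exact hw⟩
      rw [prod_eq_snd' hv]
      exact T.diag_symm _ _ (hu ▸ hd)
  · rintro (⟨x, hd, rfl⟩ | ⟨x, hd, rfl⟩)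
    · refine ⟨x, v.1, u.2, v.2, by rw [Prod.mk.eta]; exact T.diag_symm _ _ hd, ?_⟩
      have e2 : (v.1, u.2) = u := by rw [h1, Prod.mk.eta]
      rw [Prod.mk.eta, e2]
      ext p
      simp only [Finset.mem_insert, Finset.mem_singleton]
      tauto
    · refine ⟨x, u.1, v.2, u.2, by rw [Prod.mk.eta]; exact T.diag_symm _ _ hd, ?_⟩
      have e2 : (u.1, v.2) = v := by rw [← h1, Prod.mk.eta]
      rw [Prod.mk.eta, e2]
      ext p
      simp only [Finset.mem_insert, Finset.mem_singleton]
      tauto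

lemma face_diag {v u : VG × VH} (hd0 : T.diag v u) (w : VG × VH) :
    T.IsFace v u w ↔ w = (u.1, v.2) ∨ w = (v.1, u.2) := by
  constructor
  · rintro ⟨a, a', b, b', hd, heq⟩
    obtain ⟨hGa, hHb⟩ := T.diag_adj a a' b b' hd
    rcases triple_diag' hGa.ne hHb.ne (T.diag_adj' hd0).1.ne (T.diag_adj' hd0).2.ne heq with
      ⟨hv, hu, hw⟩ | ⟨hv, hu, hw⟩
    · left; rw [prod_eq_fst' hu, prod_eq_snd' hv]; exact hw
    · right; rw [prod_eq_fst' hv, prod_eq_snd' hu]; exact hw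
  · rintro (rfl | rfl)
    · exact ⟨v.1, u.1, v.2, u.2, by rw [Prod.mk.eta, Prod.mk.eta]; exact hd0,
        by rw [Prod.mk.eta, Prod.mk.eta]⟩
    · refine ⟨u.1, v.1, u.2, v.2, by rw [Prod.mk.eta, Prod.mk.eta]; exact T.diag_symm _ _ hd0, ?_⟩
      rw [Prod.mk.eta, Prod.mk.eta]
      ext p
      simp only [Finset.mem_insert, Finset.mem_singleton]
      tauto

lemma avoid_horiz_v {v u : VG × VH} (h2 : v.2 = u.2) (h1 : G.Adj v.1 u.1) (w : VG × VH) :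
    T.IsFaceAvoiding v u w v ↔ ∃ y, T.diag u (v.1, y) ∧ w = (v.1, y) := by
  constructor
  · rintro ⟨a, a', b, b', hd, heq, hne1, hne2⟩
    obtain ⟨hGa, hHb⟩ := T.diag_adj a a' b b' hd
    rcases triple_horiz' hHb.ne h2 h1.ne heq with ⟨hv, hu, hw⟩ | ⟨hv, hu, hw⟩
    · exact absurd hv hne1
    · exact ⟨b', by rw [hu, prod_eq_fst' hv]; exact hd, by rw [prod_eq_fst' hv]; exact hw⟩
  · rintro ⟨y, hd, rfl⟩
    have hy : H.Adj v.2 y := h2 ▸ (T.diag_adj' hd).2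
    refine ⟨u.1, v.1, u.2, y, hd, ?_, ?_, ?_⟩
    · have e2 : (v.1, u.2) = v := by rw [← h2]
      rw [Prod.mk.eta, e2]
      ext p
      simp only [Finset.mem_insert, Finset.mem_singleton]
      tauto
    · rw [Prod.mk.eta]; exact fun h => h1.ne (prod_eq_fst' h)
    · exact fun h => hy.ne (prod_eq_snd' h)

lemma avoid_horiz_u {v u : VG × VH} (h2 : v.2 = u.2) (h1 : G.Adj v.1 u.1) (w : VG × VH) :
    T.IsFaceAvoiding v u w u ↔ ∃ y, T.diag v (u.1, y) ∧ w = (u.1, y) := by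
  constructor
  · rintro ⟨a, a', b, b', hd, heq, hne1, hne2⟩
    obtain ⟨hGa, hHb⟩ := T.diag_adj a a' b b' hd
    rcases triple_horiz' hHb.ne h2 h1.ne heq with ⟨hv, hu, hw⟩ | ⟨hv, hu, hw⟩
    · exact ⟨b', by rw [hv, prod_eq_fst' hu]; exact hd, by rw [prod_eq_fst' hu]; exact hw⟩
    · exact absurd hu hne1
  · rintro ⟨y, hd, rfl⟩
    have hy : H.Adj u.2 y := h2 ▸ (T.diag_adj' hd).2
    refine ⟨v.1, u.1, v.2, y, by rw [Prod.mk.eta]; exact hd, ?_, ?_, ?_⟩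
    · have e2 : (u.1, v.2) = u := by rw [h2]
      rw [Prod.mk.eta, e2]
      ext p
      simp only [Finset.mem_insert, Finset.mem_singleton]
      tauto
    · rw [Prod.mk.eta]; exact fun h => h1.ne (congrArg Prod.fst h).symm
    · exact fun h => hy.ne (prod_eq_snd' h)

lemma avoid_vert_v {v u : VG × VH} (h1 : v.1 = u.1) (h2 : H.Adj v.2 u.2) (w : VG × VH) :
    T.IsFaceAvoiding v u w v ↔ ∃ x, T.diag u (x, v.2) ∧ w = (x, v.2) := by
  constructor
  · rintro ⟨a, a', b, b', hd, heq, hne1, hne2⟩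
    obtain ⟨hGa, hHb⟩ := T.diag_adj a a' b b' hd
    rcases triple_vert' hGa.ne h1 h2.ne heq with ⟨hv, hu, hw⟩ | ⟨hv, hu, hw⟩
    · exact absurd hv hne2
    · refine ⟨a, ?_, by rw [prod_eq_snd' hv]; exact hw⟩
      rw [prod_eq_snd' hv, hu]
      exact T.diag_symm _ _ hd
  · rintro ⟨x, hd, rfl⟩
    have hx : G.Adj u.1 x := (T.diag_adj' hd).1
    refine ⟨x, u.1, v.2, u.2, by rw [Prod.mk.eta]; exact T.diag_symm _ _ hd, ?_, ?_, ?_⟩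
    · have e2 : (u.1, v.2) = v := by rw [← h1, Prod.mk.eta]
      rw [Prod.mk.eta, e2]
      ext p
      simp only [Finset.mem_insert, Finset.mem_singleton]
      tauto
    · exact fun h => hx.ne (h1.symm.trans (prod_eq_fst' h))
    · rw [Prod.mk.eta]; exact fun h => h2.ne (congrArg Prod.snd h)

lemma avoid_vert_u {v u : VG × VH} (h1 : v.1 = u.1) (h2 : H.Adj v.2 u.2) (w : VG × VH) :
    T.IsFaceAvoiding v u w u ↔ ∃ x, T.diag v (x, u.2) ∧ w = (x, u.2) := by
  constructor
  · rintro ⟨a, a', b, b', hd, heq, hne1, hne2⟩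
    obtain ⟨hGa, hHb⟩ := T.diag_adj a a' b b' hd
    rcases triple_vert' hGa.ne h1 h2.ne heq with ⟨hv, hu, hw⟩ | ⟨hv, hu, hw⟩
    · refine ⟨a, ?_, by rw [prod_eq_snd' hu]; exact hw⟩
      rw [prod_eq_snd' hu, hv]
      exact T.diag_symm _ _ hd
    · exact absurd hu hne2
  · rintro ⟨x, hd, rfl⟩
    have hx : G.Adj v.1 x := (T.diag_adj' hd).1
    refine ⟨x, v.1, u.2, v.2, by rw [Prod.mk.eta]; exact T.diag_symm _ _ hd, ?_, ?_, ?_⟩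
    · have e2 : (v.1, u.2) = u := by rw [h1, Prod.mk.eta]
      rw [Prod.mk.eta, e2]
      ext p
      simp only [Finset.mem_insert, Finset.mem_singleton]
      tauto
    · exact fun h => hx.ne (h1.trans (prod_eq_fst' h))
    · rw [Prod.mk.eta]; exact fun h => h2.ne (congrArg Prod.snd h).symm

variable [Fintype VG] [Fintype VH]

lemma horiz_union {v u : VG × VH} (h2 : v.2 = u.2) (h1 : G.Adj v.1 u.1) :
    (Finset.univ.filter fun y => T.diag v (u.1, y)) ∪
      (Finset.univ.filter fun y => T.diag u (v.1, y)) =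
      Finset.univ.filter (fun y => H.Adj v.2 y) := by
  ext y
  simp only [Finset.mem_union, Finset.mem_filter, Finset.mem_univ, true_and]
  constructor
  · rintro (h | h)
    · exact (T.diag_adj' h).2
    · exact h2 ▸ (T.diag_adj' h).2
  · intro hy
    rcases T.diag_choice v.1 u.1 v.2 y h1 hy with ⟨h, _⟩ | ⟨_, h⟩
    · left; rw [Prod.mk.eta] at h; exact h
    · right
      have e2 : (u.1, v.2) = u := by rw [h2]
      have := T.diag_symm _ _ h
      rwa [e2] at this

lemma horiz_disj {v u : VG × VH} (h2 : v.2 = u.2) (h1 : G.Adj v.1 u.1) :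
    Disjoint (Finset.univ.filter fun y => T.diag v (u.1, y))
      (Finset.univ.filter fun y => T.diag u (v.1, y)) := by
  rw [Finset.disjoint_left]
  intro y hy1 hy2
  simp only [Finset.mem_filter, Finset.mem_univ, true_and] at hy1 hy2
  have hy : H.Adj v.2 y := (T.diag_adj' hy1).2
  have hy1' : T.diag (v.1, v.2) (u.1, y) := by rw [Prod.mk.eta]; exact hy1
  have hy2' : T.diag (v.1, y) (u.1, v.2) := by
    have e2 : (u.1, v.2) = u := by rw [h2]
    exact T.diag_symm _ _ (e2 ▸ hy2)
  rcases T.diag_choice v.1 u.1 v.2 y h1 hy with ⟨_, hn⟩ | ⟨hn, _⟩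
  · exact hn hy2'
  · exact hn hy1'

lemma vert_union {v u : VG × VH} (h1 : v.1 = u.1) (h2 : H.Adj v.2 u.2) :
    (Finset.univ.filter fun x => T.diag v (x, u.2)) ∪
      (Finset.univ.filter fun x => T.diag u (x, v.2)) =
      Finset.univ.filter (fun x => G.Adj v.1 x) := by
  ext x
  simp only [Finset.mem_union, Finset.mem_filter, Finset.mem_univ, true_and]
  constructor
  · rintro (h | h)
    · exact (T.diag_adj' h).1
    · exact h1 ▸ (T.diag_adj' h).1
  · intro hx
    rcases T.diag_choice v.1 x v.2 u.2 hx h2 with ⟨h, _⟩ | ⟨_, h⟩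
    · left; rw [Prod.mk.eta] at h; exact h
    · right
      have e2 : (v.1, u.2) = u := by rw [h1, Prod.mk.eta]
      rwa [e2] at h

lemma vert_disj {v u : VG × VH} (h1 : v.1 = u.1) (h2 : H.Adj v.2 u.2) :
    Disjoint (Finset.univ.filter fun x => T.diag v (x, u.2))
      (Finset.univ.filter fun x => T.diag u (x, v.2)) := by
  rw [Finset.disjoint_left]
  intro x hx1 hx2
  simp only [Finset.mem_filter, Finset.mem_univ, true_and] at hx1 hx2
  have hx : G.Adj v.1 x := (T.diag_adj' hx1).1
  have hx1' : T.diag (v.1, v.2) (x, u.2) := by rw [Prod.mk.eta]; exact hx1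
  have hx2' : T.diag (v.1, u.2) (x, v.2) := by
    have e2 : (v.1, u.2) = u := by rw [h1, Prod.mk.eta]
    exact e2 ▸ hx2
  rcases T.diag_choice v.1 x v.2 u.2 hx h2 with ⟨_, hn⟩ | ⟨hn, _⟩
  · exact hn hx2'
  · exact hn hx1'

lemma alpha_diag_v {v u : VG × VH} (hd : T.diag v u) : T.alpha v u v = 1 := by
  simp [TriProd.alpha, hd]

lemma alpha_diag_u {v u : VG × VH} (hd : T.diag v u) : T.alpha v u u = 1 := by
  simp [TriProd.alpha, hd]

private lemma mk_left_inj (c : VG) : Function.Injective (fun y : VH => (c, y)) :=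
  fun _ _ h => congrArg Prod.snd h

private lemma mk_right_inj (c : VH) : Function.Injective (fun x : VG => (x, c)) :=
  fun _ _ h => congrArg Prod.fst h

lemma alpha_horiz_v {v u : VG × VH} (h2 : v.2 = u.2) (h1 : G.Adj v.1 u.1) :
    T.alpha v u v = ((Finset.univ.filter fun y => T.diag u (v.1, y)).card : ℤ) := by
  have hfe : Finset.univ.filter (fun w => T.IsFaceAvoiding v u w v)
      = (Finset.univ.filter fun y => T.diag u (v.1, y)).image (fun y => (v.1, y)) := by
    ext w
    simp only [Finset.mem_filter, Finset.mem_univ, true_and, Finset.mem_image,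
      T.avoid_horiz_v h2 h1]
    constructor
    · rintro ⟨y, hd, rfl⟩; exact ⟨y, hd, rfl⟩
    · rintro ⟨y, hd, rfl⟩; exact ⟨y, hd, rfl⟩
  simp only [TriProd.alpha, if_pos (Or.inl rfl), if_neg (T.not_diag_of_eq_snd h2), hfe,
    Finset.card_image_of_injective _ (mk_left_inj v.1)]
  simp

lemma alpha_horiz_u {v u : VG × VH} (h2 : v.2 = u.2) (h1 : G.Adj v.1 u.1) :
    T.alpha v u u = ((Finset.univ.filter fun y => T.diag v (u.1, y)).card : ℤ) := by
  have hfe : Finset.univ.filter (fun w => T.IsFaceAvoiding v u w u)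
      = (Finset.univ.filter fun y => T.diag v (u.1, y)).image (fun y => (u.1, y)) := by
    ext w
    simp only [Finset.mem_filter, Finset.mem_univ, true_and, Finset.mem_image,
      T.avoid_horiz_u h2 h1]
    constructor
    · rintro ⟨y, hd, rfl⟩; exact ⟨y, hd, rfl⟩
    · rintro ⟨y, hd, rfl⟩; exact ⟨y, hd, rfl⟩
  simp only [TriProd.alpha, if_pos (Or.inr rfl), if_neg (T.not_diag_of_eq_snd h2), hfe,
    Finset.card_image_of_injective _ (mk_left_inj u.1)]
  simp

lemma alpha_vert_v {v u : VG × VH} (h1 : v.1 = u.1) (h2 : H.Adj v.2 u.2) :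
    T.alpha v u v = ((Finset.univ.filter fun x => T.diag u (x, v.2)).card : ℤ) := by
  have hfe : Finset.univ.filter (fun w => T.IsFaceAvoiding v u w v)
      = (Finset.univ.filter fun x => T.diag u (x, v.2)).image (fun x => (x, v.2)) := by
    ext w
    simp only [Finset.mem_filter, Finset.mem_univ, true_and, Finset.mem_image,
      T.avoid_vert_v h1 h2]
    constructor
    · rintro ⟨x, hd, rfl⟩; exact ⟨x, hd, rfl⟩
    · rintro ⟨x, hd, rfl⟩; exact ⟨x, hd, rfl⟩
  simp only [TriProd.alpha, if_pos (Or.inl rfl), if_neg (T.not_diag_of_eq_fst h1), hfe,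
    Finset.card_image_of_injective _ (mk_right_inj v.2)]
  simp

lemma alpha_vert_u {v u : VG × VH} (h1 : v.1 = u.1) (h2 : H.Adj v.2 u.2) :
    T.alpha v u u = ((Finset.univ.filter fun x => T.diag v (x, u.2)).card : ℤ) := by
  have hfe : Finset.univ.filter (fun w => T.IsFaceAvoiding v u w u)
      = (Finset.univ.filter fun x => T.diag v (x, u.2)).image (fun x => (x, u.2)) := by
    ext w
    simp only [Finset.mem_filter, Finset.mem_univ, true_and, Finset.mem_image,
      T.avoid_vert_u h1 h2]
    constructor
    · rintro ⟨x, hd, rfl⟩; exact ⟨x, hd, rfl⟩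
    · rintro ⟨x, hd, rfl⟩; exact ⟨x, hd, rfl⟩
  simp only [TriProd.alpha, if_pos (Or.inr rfl), if_neg (T.not_diag_of_eq_fst h1), hfe,
    Finset.card_image_of_injective _ (mk_right_inj u.2)]
  simp

/-- The ℚ-valued local divisor. -/
noncomputable def divQ (φ : VG × VH → ℚ) (v u : VG × VH) : ℚ :=
  (∑ w ∈ Finset.univ.filter (fun w => T.IsFace v u w), φ w)
    - ((T.alpha v u v : ℚ) * φ v + (T.alpha v u u : ℚ) * φ u)

lemma sum_div_ind (v u : VG × VH) (φ : VG × VH → ℚ) :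
    ∑ w, ((T.Div (fun p => if p = w then 1 else 0) v u : ℤ) : ℚ) * φ w = T.divQ φ v u := by
  simp only [TriProd.Div, TriProd.divQ]
  push_cast
  simp only [sub_mul, add_mul, Finset.sum_mul]
  rw [Finset.sum_sub_distrib]
  congr 1
  · rw [Finset.sum_comm]
    simp [ite_mul, Finset.sum_ite_eq']
  · rw [Finset.sum_add_distrib]
    simp [mul_ite, ite_mul, Finset.sum_ite_eq]

lemma divq_diag {v u : VG × VH} (hd : T.diag v u) (φ : VG × VH → ℚ) :
    T.divQ φ v u = φ (u.1, v.2) + φ (v.1, u.2) - φ v - φ u := by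
  have hne : ((u.1, v.2) : VG × VH) ≠ (v.1, u.2) :=
    fun h => (T.diag_adj' hd).1.ne (congrArg Prod.fst h).symm
  have hF : Finset.univ.filter (fun w => T.IsFace v u w) = {(u.1, v.2), (v.1, u.2)} := by
    ext w
    simp [T.face_diag hd]
  rw [TriProd.divQ, hF, Finset.sum_pair hne, T.alpha_diag_v hd, T.alpha_diag_u hd]
  push_cast
  ring

lemma divq_horiz {v u : VG × VH} (h2 : v.2 = u.2) (h1 : G.Adj v.1 u.1) (φ : VG × VH → ℚ) :
    T.divQ φ v u =
      (∑ y ∈ Finset.univ.filter (fun y => T.diag v (u.1, y)), φ (u.1, y))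
      + (∑ y ∈ Finset.univ.filter (fun y => T.diag u (v.1, y)), φ (v.1, y))
      - ((((Finset.univ.filter fun y => T.diag u (v.1, y)).card : ℚ)) * φ v
        + (((Finset.univ.filter fun y => T.diag v (u.1, y)).card : ℚ)) * φ u) := by
  have hF : Finset.univ.filter (fun w => T.IsFace v u w)
      = ((Finset.univ.filter fun y => T.diag v (u.1, y)).image (fun y => (u.1, y)))
        ∪ ((Finset.univ.filter fun y => T.diag u (v.1, y)).image (fun y => (v.1, y))) := by
    ext w
    simp only [Finset.mem_filter, Finset.mem_univ, true_and, Finset.mem_union,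
      Finset.mem_image, T.face_horiz h2 h1]
    constructor
    · rintro (⟨y, hd, rfl⟩ | ⟨y, hd, rfl⟩)
      · exact Or.inl ⟨y, hd, rfl⟩
      · exact Or.inr ⟨y, hd, rfl⟩
    · rintro (⟨y, hd, rfl⟩ | ⟨y, hd, rfl⟩)
      · exact Or.inl ⟨y, hd, rfl⟩
      · exact Or.inr ⟨y, hd, rfl⟩
  have hdisj : Disjoint
      ((Finset.univ.filter fun y => T.diag v (u.1, y)).image (fun y => (u.1, y)))
      ((Finset.univ.filter fun y => T.diag u (v.1, y)).image (fun y => (v.1, y))) := by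
    rw [Finset.disjoint_left]
    rintro w hw1 hw2
    simp only [Finset.mem_image] at hw1 hw2
    obtain ⟨y, _, rfl⟩ := hw1
    obtain ⟨y', _, hw⟩ := hw2
    exact h1.ne (Prod.ext_iff.mp hw).1
  rw [TriProd.divQ, hF, Finset.sum_union hdisj,
    Finset.sum_image (fun a _ b _ h => mk_left_inj u.1 h),
    Finset.sum_image (fun a _ b _ h => mk_left_inj v.1 h),
    T.alpha_horiz_v h2 h1, T.alpha_horiz_u h2 h1]
  push_cast
  ring

lemma divq_vert {v u : VG × VH} (h1 : v.1 = u.1) (h2 : H.Adj v.2 u.2) (φ : VG × VH → ℚ) :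
    T.divQ φ v u =
      (∑ x ∈ Finset.univ.filter (fun x => T.diag v (x, u.2)), φ (x, u.2))
      + (∑ x ∈ Finset.univ.filter (fun x => T.diag u (x, v.2)), φ (x, v.2))
      - ((((Finset.univ.filter fun x => T.diag u (x, v.2)).card : ℚ)) * φ v
        + (((Finset.univ.filter fun x => T.diag v (x, u.2)).card : ℚ)) * φ u) := by
  have hF : Finset.univ.filter (fun w => T.IsFace v u w)
      = ((Finset.univ.filter fun x => T.diag v (x, u.2)).image (fun x => (x, u.2)))
        ∪ ((Finset.univ.filter fun x => T.diag u (x, v.2)).image (fun x => (x, v.2))) := by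
    ext w
    simp only [Finset.mem_filter, Finset.mem_univ, true_and, Finset.mem_union,
      Finset.mem_image, T.face_vert h1 h2]
    constructor
    · rintro (⟨x, hd, rfl⟩ | ⟨x, hd, rfl⟩)
      · exact Or.inl ⟨x, hd, rfl⟩
      · exact Or.inr ⟨x, hd, rfl⟩
    · rintro (⟨x, hd, rfl⟩ | ⟨x, hd, rfl⟩)
      · exact Or.inl ⟨x, hd, rfl⟩
      · exact Or.inr ⟨x, hd, rfl⟩
  have hdisj : Disjoint
      ((Finset.univ.filter fun x => T.diag v (x, u.2)).image (fun x => (x, u.2)))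
      ((Finset.univ.filter fun x => T.diag u (x, v.2)).image (fun x => (x, v.2))) := by
    rw [Finset.disjoint_left]
    rintro w hw1 hw2
    simp only [Finset.mem_image] at hw1 hw2
    obtain ⟨x, _, rfl⟩ := hw1
    obtain ⟨x', _, hw⟩ := hw2
    exact h2.ne (Prod.ext_iff.mp hw).2
  rw [TriProd.divQ, hF, Finset.sum_union hdisj,
    Finset.sum_image (fun a _ b _ h => mk_right_inj u.2 h),
    Finset.sum_image (fun a _ b _ h => mk_right_inj v.2 h),
    T.alpha_vert_v h1 h2, T.alpha_vert_u h1 h2]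
  push_cast
  ring

/-- Extension by zero of a function on diagonal neighbours of `v`. -/
noncomputable def ext0 (v : VG × VH) (f : {u : VG × VH // T.diag v u} → ℚ) :
    VG × VH → ℚ := fun w => if h : T.diag v w then f ⟨w, h⟩ else 0

lemma ext0_add (v : VG × VH) (f g : {u : VG × VH // T.diag v u} → ℚ) (w : VG × VH) :
    T.ext0 v (f + g) w = T.ext0 v f w + T.ext0 v g w := by
  unfold TriProd.ext0; split <;> simp

lemma ext0_smul (v : VG × VH) (c : ℚ) (f : {u : VG × VH // T.diag v u} → ℚ) (w : VG × VH) :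
    T.ext0 v (c • f) w = c * T.ext0 v f w := by
  unfold TriProd.ext0; split <;> simp

/-- The model map whose range is the local divisor space. -/
noncomputable def Jfun (v : VG × VH)
    (z : ({u : VG × VH // T.diag v u} → ℚ) × ℚ × ℚ) : {u : VG × VH // T.Adj v u} → ℚ :=
  fun u =>
    if T.diag v u.1 then T.ext0 v z.1 u.1
    else if v.2 = u.1.2 then
      z.2.1 - ∑ y ∈ Finset.univ.filter (fun y => T.diag v (u.1.1, y)), T.ext0 v z.1 (u.1.1, y)
    else
      z.2.2 - ∑ x ∈ Finset.univ.filter (fun x => T.diag v (x, u.1.2)), T.ext0 v z.1 (x, u.1.2)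

/-- `Jfun` as a linear map. -/
noncomputable def Jmap (v : VG × VH) :
    (({u : VG × VH // T.diag v u} → ℚ) × ℚ × ℚ) →ₗ[ℚ] ({u : VG × VH // T.Adj v u} → ℚ) where
  toFun := T.Jfun v
  map_add' z z' := by
    funext u
    simp only [TriProd.Jfun, Prod.fst_add, Prod.snd_add, Pi.add_apply, T.ext0_add]
    split_ifs <;> simp [Finset.sum_add_distrib] <;> ring
  map_smul' c z := by
    funext u
    simp only [TriProd.Jfun, Prod.smul_fst, Prod.smul_snd, Pi.smul_apply, smul_eq_mul,
      T.ext0_smul, RingHom.id_apply]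
    split_ifs <;> simp only [mul_sub, Finset.mul_sum]

lemma Jmap_apply (v : VG × VH) (z : ({u : VG × VH // T.diag v u} → ℚ) × ℚ × ℚ) :
    T.Jmap v z = T.Jfun v z := rfl

lemma Jmap_inj (hG : G.Connected) (hH : H.Connected)
    (hGe : ∃ a a', G.Adj a a') (hHe : ∃ b b', H.Adj b b') (v : VG × VH) :
    Function.Injective (T.Jmap v) := by
  rw [← LinearMap.ker_eq_bot, LinearMap.ker_eq_bot']
  intro z hz
  have hf : z.1 = 0 := by
    funext w
    have hAdj : T.Adj v w.1 := Or.inr (Or.inr w.2)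
    have h0 := congrFun hz ⟨w.1, hAdj⟩
    simpa [TriProd.Jmap, TriProd.Jfun, TriProd.ext0, w.2] using h0
  obtain ⟨x, hx⟩ := exists_nbr hG hGe v.1
  obtain ⟨y, hy⟩ := exists_nbr hH hHe v.2
  have hs : z.2.1 = 0 := by
    have hAdj : T.Adj v (x, v.2) := Or.inl ⟨rfl, hx⟩
    have hnd : ¬ T.diag v (x, v.2) := T.not_diag_of_eq_snd rfl
    have h0 := congrFun hz ⟨(x, v.2), hAdj⟩
    simpa [TriProd.Jmap, TriProd.Jfun, TriProd.ext0, hnd, hf] using h0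
  have ht : z.2.2 = 0 := by
    have hAdj : T.Adj v (v.1, y) := Or.inr (Or.inl ⟨rfl, hy⟩)
    have hnd : ¬ T.diag v (v.1, y) := T.not_diag_of_eq_fst rfl
    have h0 := congrFun hz ⟨(v.1, y), hAdj⟩
    simpa [TriProd.Jmap, TriProd.Jfun, TriProd.ext0, hnd, hf, hy.ne] using h0
  exact Prod.ext hf (Prod.ext hs ht)

lemma mulVec_divq (v : VG × VH) (φ : VG × VH → ℚ) :
    (Matrix.of fun (u : {u : VG × VH // T.Adj v u}) (w : VG × VH) =>
        ((T.Div (fun p => if p = w then 1 else 0) v u.1 : ℤ) : ℚ)).mulVecLin φ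
      = fun u => T.divQ φ v u.1 := by
  funext u
  simp only [Matrix.mulVecLin_apply, Matrix.mulVec, dotProduct, Matrix.of_apply]
  exact T.sum_div_ind v u.1 φ

lemma divq_eq_J (v : VG × VH) (φ : VG × VH → ℚ) :
    (fun u : {u : VG × VH // T.Adj v u} => T.divQ φ v u.1) = T.Jmap v
      (fun w => φ (w.1.1, v.2) + φ (v.1, w.1.2) - φ v - φ w.1,
       ∑ y ∈ Finset.univ.filter (fun y => H.Adj v.2 y), (φ (v.1, y) - φ v),
       ∑ x ∈ Finset.univ.filter (fun x => G.Adj v.1 x), (φ (x, v.2) - φ v)) := by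
  funext u
  obtain ⟨u, hAdj⟩ := u
  rw [Jmap_apply]
  by_cases hd : T.diag v u
  · rw [T.divq_diag hd φ]
    simp only [TriProd.Jfun, if_pos hd, TriProd.ext0, dif_pos hd]
  · rw [TriProd.Jfun, if_neg hd]
    rcases hAdj with ⟨h2, h1⟩ | ⟨h1, h2⟩ | hd'
    · -- horizontal edge
      rw [if_pos h2, T.divq_horiz h2 h1 φ]
      have e : ((u.1 : VG), v.2) = u := by rw [h2]
      have hsum : ∀ y ∈ Finset.univ.filter (fun y => T.diag v (u.1, y)),
          T.ext0 v (fun w : {w : VG × VH // T.diag v w} =>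
              φ (w.1.1, v.2) + φ (v.1, w.1.2) - φ v - φ w.1) (u.1, y)
            = φ (u.1, v.2) + φ (v.1, y) - φ v - φ (u.1, y) := by
        intro y hy
        rw [TriProd.ext0, dif_pos (Finset.mem_filter.mp hy).2]
      rw [Finset.sum_congr rfl hsum, ← T.horiz_union h2 h1,
        Finset.sum_union (T.horiz_disj h2 h1)]
      simp only [e, Finset.sum_sub_distrib, Finset.sum_add_distrib, Finset.sum_const,
        nsmul_eq_mul]
      ring
    · -- vertical edge
      rw [if_neg (fun hc => h2.ne hc), T.divq_vert h1 h2 φ]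
      have e : ((v.1 : VG), (u.2 : VH)) = u := by rw [h1]
      have hsum : ∀ x ∈ Finset.univ.filter (fun x => T.diag v (x, u.2)),
          T.ext0 v (fun w : {w : VG × VH // T.diag v w} =>
              φ (w.1.1, v.2) + φ (v.1, w.1.2) - φ v - φ w.1) (x, u.2)
            = φ (x, v.2) + φ (v.1, u.2) - φ v - φ (x, u.2) := by
        intro x hx
        rw [TriProd.ext0, dif_pos (Finset.mem_filter.mp hx).2]
      rw [Finset.sum_congr rfl hsum, ← T.vert_union h1 h2,
        Finset.sum_union (T.vert_disj h1 h2)]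
      simp only [e, Finset.sum_sub_distrib, Finset.sum_add_distrib, Finset.sum_const,
        nsmul_eq_mul]
      ring
    · exact absurd hd' hd

/-- The local potential realizing a given element of the model space. -/
noncomputable def phiOf (v : VG × VH) (z : {u : VG × VH // T.diag v u} → ℚ)
    (cG cH : ℚ) : VG × VH → ℚ := fun p =>
  if p = v then 0
  else if p.2 = v.2 ∧ G.Adj v.1 p.1 then cG
  else if p.1 = v.1 ∧ H.Adj v.2 p.2 then cH
  else if h : T.diag v p then cG + cH - z ⟨p, h⟩ else 0

lemma phiOf_v (v : VG × VH) (z : {u : VG × VH // T.diag v u} → ℚ) (cG cH : ℚ) :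
    T.phiOf v z cG cH v = 0 := if_pos rfl

lemma phiOf_horiz {v p : VG × VH} (z : {u : VG × VH // T.diag v u} → ℚ) (cG cH : ℚ)
    (h1 : G.Adj v.1 p.1) (h2 : p.2 = v.2) : T.phiOf v z cG cH p = cG := by
  rw [TriProd.phiOf, if_neg (fun hc => h1.ne (congrArg Prod.fst hc).symm), if_pos ⟨h2, h1⟩]

lemma phiOf_vert {v p : VG × VH} (z : {u : VG × VH // T.diag v u} → ℚ) (cG cH : ℚ)
    (h2 : H.Adj v.2 p.2) (h1 : p.1 = v.1) : T.phiOf v z cG cH p = cH := by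
  rw [TriProd.phiOf, if_neg (fun hc => h2.ne (congrArg Prod.snd hc).symm),
    if_neg (fun hc => h2.ne hc.1.symm), if_pos ⟨h1, h2⟩]

lemma phiOf_diag {v p : VG × VH} (z : {u : VG × VH // T.diag v u} → ℚ) (cG cH : ℚ)
    (h : T.diag v p) : T.phiOf v z cG cH p = cG + cH - z ⟨p, h⟩ := by
  have hGp := (T.diag_adj' h).1
  have hHp := (T.diag_adj' h).2
  rw [TriProd.phiOf, if_neg (fun hc => hGp.ne (congrArg Prod.fst hc).symm),
    if_neg (fun hc => hHp.ne hc.1.symm), if_neg (fun hc => hGp.ne hc.1.symm), dif_pos h]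

lemma J_range (hG : G.Connected) (hH : H.Connected)
    (hGe : ∃ a a', G.Adj a a') (hHe : ∃ b b', H.Adj b b') (v : VG × VH)
    (z : ({u : VG × VH // T.diag v u} → ℚ) × ℚ × ℚ) :
    ∃ φ : VG × VH → ℚ,
      (fun u : {u : VG × VH // T.Adj v u} => T.divQ φ v u.1) = T.Jmap v z := by
  obtain ⟨x0, hx0⟩ := exists_nbr hG hGe v.1
  obtain ⟨y0, hy0⟩ := exists_nbr hH hHe v.2
  have hdG : (((Finset.univ.filter fun x => G.Adj v.1 x).card : ℚ)) ≠ 0 :=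
    Nat.cast_ne_zero.mpr (Finset.card_ne_zero_of_mem (Finset.mem_filter.mpr ⟨Finset.mem_univ x0, hx0⟩))
  have hdH : (((Finset.univ.filter fun y => H.Adj v.2 y).card : ℚ)) ≠ 0 :=
    Nat.cast_ne_zero.mpr (Finset.card_ne_zero_of_mem (Finset.mem_filter.mpr ⟨Finset.mem_univ y0, hy0⟩))
  set cG : ℚ := z.2.2 / ((Finset.univ.filter fun x => G.Adj v.1 x).card : ℚ) with hcG
  set cH : ℚ := z.2.1 / ((Finset.univ.filter fun y => H.Adj v.2 y).card : ℚ) with hcH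
  refine ⟨T.phiOf v z.1 cG cH, ?_⟩
  funext u
  obtain ⟨u, hAdj⟩ := u
  rw [Jmap_apply]
  by_cases hd : T.diag v u
  · rw [T.divq_diag hd, TriProd.Jfun, if_pos hd,
      T.phiOf_horiz (p := (u.1, v.2)) z.1 cG cH (T.diag_adj' hd).1 rfl,
      T.phiOf_vert (p := (v.1, u.2)) z.1 cG cH (T.diag_adj' hd).2 rfl,
      T.phiOf_v, T.phiOf_diag z.1 cG cH hd, TriProd.ext0]
    rw [dif_pos hd]
    ring
  · rw [TriProd.Jfun, if_neg hd]
    rcases hAdj with ⟨h2, h1⟩ | ⟨h1, h2⟩ | hd'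
    · -- horizontal edge
      rw [if_pos h2, T.divq_horiz h2 h1]
      have hs1 : ∀ y ∈ Finset.univ.filter (fun y => T.diag v (u.1, y)),
          T.phiOf v z.1 cG cH (u.1, y) = cG + cH - T.ext0 v z.1 (u.1, y) := by
        intro y hy
        have hyd := (Finset.mem_filter.mp hy).2
        rw [T.phiOf_diag z.1 cG cH hyd, TriProd.ext0, dif_pos hyd]
      have hs2 : ∀ y ∈ Finset.univ.filter (fun y => T.diag u (v.1, y)),
          T.phiOf v z.1 cG cH (v.1, y) = cH := by
        intro y hy
        have hyd := (T.diag_adj' (Finset.mem_filter.mp hy).2).2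
        rw [← h2] at hyd
        exact T.phiOf_vert (p := (v.1, y)) z.1 cG cH hyd rfl
      rw [Finset.sum_congr rfl hs1, Finset.sum_congr rfl hs2, T.phiOf_v,
        T.phiOf_horiz (p := u) z.1 cG cH h1 h2.symm]
      have h3 : (Finset.univ.filter (fun y => T.diag v (u.1, y))).card
          + (Finset.univ.filter (fun y => T.diag u (v.1, y))).card
          = (Finset.univ.filter (fun y => H.Adj v.2 y)).card := by
        rw [← Finset.card_union_of_disjoint (T.horiz_disj h2 h1), T.horiz_union h2 h1]
      have hcard : (((Finset.univ.filter (fun y => T.diag v (u.1, y))).card : ℚ)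
          + ((Finset.univ.filter (fun y => T.diag u (v.1, y))).card : ℚ)) * cH = z.2.1 := by
        rw [hcH, ← Nat.cast_add, h3]
        field_simp
      simp only [Finset.sum_sub_distrib, Finset.sum_add_distrib, Finset.sum_const,
        nsmul_eq_mul]
      linear_combination hcard
    · -- vertical edge
      rw [if_neg (fun hc => h2.ne hc), T.divq_vert h1 h2]
      have hs1 : ∀ x ∈ Finset.univ.filter (fun x => T.diag v (x, u.2)),
          T.phiOf v z.1 cG cH (x, u.2) = cG + cH - T.ext0 v z.1 (x, u.2) := by
        intro x hx
        have hxd := (Finset.mem_filter.mp hx).2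
        rw [T.phiOf_diag z.1 cG cH hxd, TriProd.ext0, dif_pos hxd]
      have hs2 : ∀ x ∈ Finset.univ.filter (fun x => T.diag u (x, v.2)),
          T.phiOf v z.1 cG cH (x, v.2) = cG := by
        intro x hx
        have hxd := (T.diag_adj' (Finset.mem_filter.mp hx).2).1
        rw [← h1] at hxd
        exact T.phiOf_horiz (p := (x, v.2)) z.1 cG cH hxd rfl
      rw [Finset.sum_congr rfl hs1, Finset.sum_congr rfl hs2, T.phiOf_v,
        T.phiOf_vert (p := u) z.1 cG cH h2 h1.symm]
      have h3 : (Finset.univ.filter (fun x => T.diag v (x, u.2))).card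
          + (Finset.univ.filter (fun x => T.diag u (x, v.2))).card
          = (Finset.univ.filter (fun x => G.Adj v.1 x)).card := by
        rw [← Finset.card_union_of_disjoint (T.vert_disj h1 h2), T.vert_union h1 h2]
      have hcard : (((Finset.univ.filter (fun x => T.diag v (x, u.2))).card : ℚ)
          + ((Finset.univ.filter (fun x => T.diag u (x, v.2))).card : ℚ)) * cG = z.2.2 := by
        rw [hcG, ← Nat.cast_add, h3]
        field_simp
      simp only [Finset.sum_sub_distrib, Finset.sum_add_distrib, Finset.sum_const,
        nsmul_eq_mul]
      linear_combination hcard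
    · exact absurd hd' hd

end TriProd

end RankAux

/-- For a vertex `v` of the triangulated product `Δ`, the matrix `M_v`
(rows indexed by the edges of `Δ` containing `v`, i.e. by the neighbours of `v` in `Δ`;
columns indexed by the vertices `w` of `Δ`; entry `Div(1_w)` evaluated at the given edge)
has rank over ℚ equal to the number of diagonal edges of `Δ` containing `v`, plus `2`. -/
theorem rank_local_matrix {VG VH : Type*} [Fintype VG] [Fintype VH]
    (G : SimpleGraph VG) (H : SimpleGraph VH)
    (hG : G.Connected) (hH : H.Connected)
    (hGe : ∃ a a', G.Adj a a') (hHe : ∃ b b', H.Adj b b')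
    (T : TriProd G H)
    (v : VG × VH) :
    (Matrix.of fun (u : {u : VG × VH // T.Adj v u}) (w : VG × VH) =>
        ((T.Div (fun p => if p = w then 1 else 0) v u.1 : ℤ) : ℚ)).rank =
      (Finset.univ.filter (fun u : VG × VH => T.diag v u)).card + 2 := by
  classical
  rw [Matrix.rank]
  have hrange : LinearMap.range (Matrix.of fun (u : {u : VG × VH // T.Adj v u})
        (w : VG × VH) =>
        ((T.Div (fun p => if p = w then 1 else 0) v u.1 : ℤ) : ℚ)).mulVecLin
      = LinearMap.range (T.Jmap v) := by
    apply le_antisymm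
    · rintro D hD
      obtain ⟨φ, rfl⟩ := hD
      rw [T.mulVec_divq v φ, T.divq_eq_J v φ]
      exact LinearMap.mem_range_self _ _
    · rintro D hD
      obtain ⟨z, rfl⟩ := hD
      obtain ⟨φ, hφ⟩ := T.J_range hG hH hGe hHe v z
      exact ⟨φ, by rw [T.mulVec_divq v φ, hφ]⟩
  rw [hrange, LinearMap.finrank_range_of_inj (T.Jmap_inj hG hH hGe hHe v)]
  rw [Module.finrank_prod, Module.finrank_prod, Module.finrank_pi, Module.finrank_self,
    Fintype.card_subtype]
end

section
/- For every finite connected simple graph G with at least one vertex, Pic(G) is isomorphic as an abelian group to ℤ × K(G) for some finite abelian group K(G). -/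
open scoped Classical
open Finset

section Aux
variable {VG : Type*} [Fintype VG] (G : SimpleGraph VG)

/-- column sum is zero -/
lemma lapCol_col_sum (w : VG) : ∑ v, lapCol G w v = 0 := by
  have h : ∀ v, lapCol G w v
      = (if G.Adj v w then 1 else 0)
        + (if v = w then -(((Finset.univ.filter (fun u => G.Adj w u)).card : ℤ)) else 0) := by
    intro v
    by_cases hv : v = w
    · subst hv; simp [lapCol, G.irrefl]
    · simp [lapCol, hv]
  rw [Finset.sum_congr rfl fun v _ => h v, Finset.sum_add_distrib]
  rw [Finset.sum_ite_eq' Finset.univ w (fun _ => -(((Finset.univ.filter (fun u => G.Adj w u)).card : ℤ)))]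
  simp only [Finset.mem_univ, if_true]
  rw [Finset.sum_boole]
  have : Finset.univ.filter (fun x => G.Adj x w) = Finset.univ.filter (fun u => G.Adj w u) := by
    apply Finset.filter_congr; intro x _; simp [G.adj_comm]
  rw [this]; ring

end Aux

section Q
variable {VG : Type*} [Fintype VG] (G : SimpleGraph VG)

/-- weighted row expansion -/
lemma lapCol_row_expand (x : VG → ℚ) (u : VG) :
    ∑ w, x w * (lapCol G w u : ℚ)
      = (∑ w ∈ Finset.univ.filter (fun t => G.Adj u t), x w)
        - ((Finset.univ.filter (fun t => G.Adj u t)).card : ℚ) * x u := by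
  have h : ∀ w, x w * (lapCol G w u : ℚ)
      = (if G.Adj u w then x w else 0)
        + (if w = u then -(((Finset.univ.filter (fun t => G.Adj u t)).card : ℚ)) * x u else 0) := by
    intro w
    by_cases hw : w = u
    · subst hw; simp [lapCol, G.irrefl]; ring
    · have : u ≠ w := fun h => hw h.symm
      by_cases ha : G.Adj u w
      · simp [lapCol, this, ha, hw]
      · simp [lapCol, this, ha, hw]
  rw [Finset.sum_congr rfl fun w _ => h w, Finset.sum_add_distrib,
    Finset.sum_ite_eq' Finset.univ u]
  simp only [Finset.mem_univ, if_true, ← Finset.sum_filter]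
  ring

/-- maximum principle: kernel of the Laplacian consists of constants -/
lemma lap_ker_const (hG : G.Connected) (x : VG → ℚ)
    (hx : ∀ v, ∑ w, x w * (lapCol G w v : ℚ) = 0) (v v' : VG) : x v = x v' := by
  have : Nonempty VG := ⟨v⟩
  classical
  obtain ⟨v0, -, hv0⟩ := Finset.exists_max_image Finset.univ x ⟨v, Finset.mem_univ v⟩
  have key : ∀ u, x u = x v0 → ∀ u', G.Adj u u' → x u' = x v0 := by
    intro u hu u' hadj
    have h1 := lapCol_row_expand G x u
    rw [hx u] at h1
    have h2 : (∑ w ∈ Finset.univ.filter (fun t => G.Adj u t), x w)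
        = ((Finset.univ.filter (fun t => G.Adj u t)).card : ℚ) * x u := by linarith
    by_contra hne
    have hlt : x u' < x v0 := lt_of_le_of_ne (hv0 u' (Finset.mem_univ u')) hne
    have hstrict : (∑ w ∈ Finset.univ.filter (fun t => G.Adj u t), x w)
        < ∑ _w ∈ Finset.univ.filter (fun t => G.Adj u t), x v0 := by
      apply Finset.sum_lt_sum
      · intro i _; exact hv0 i (Finset.mem_univ i)
      · exact ⟨u', by simp [hadj], hlt⟩
    rw [Finset.sum_const, nsmul_eq_mul] at hstrict
    rw [h2, hu] at hstrict
    exact lt_irrefl _ hstrict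
  have walk : ∀ {a b : VG} (_ : G.Walk a b), x a = x v0 → x b = x v0 := by
    intro a b p
    induction p with
    | nil => exact id
    | cons h _ ih => intro ha; exact ih (key _ ha _ h)
  have hall : ∀ u, x u = x v0 := fun u => walk ((hG.preconnected v0 u).some) rfl
  rw [hall v, hall v']

end Q

section LA
variable {VG : Type*} [Fintype VG] [Nonempty VG] (G : SimpleGraph VG)

noncomputable def lapLin : (VG → ℚ) →ₗ[ℚ] (VG → ℚ) where
  toFun y := fun v => ∑ w, y w * (lapCol G w v : ℚ)
  map_add' y z := by funext v; simp [add_mul, Finset.sum_add_distrib]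
  map_smul' c y := by funext v; simp [Finset.mul_sum, mul_assoc]

noncomputable def sumLin : (VG → ℚ) →ₗ[ℚ] ℚ where
  toFun y := ∑ v, y v
  map_add' y z := by simp [Finset.sum_add_distrib]
  map_smul' c y := by simp [Finset.mul_sum]

lemma range_lapLin_le : LinearMap.range (lapLin G) ≤ LinearMap.ker (sumLin (VG := VG)) := by
  rintro _ ⟨y, rfl⟩
  simp only [LinearMap.mem_ker, sumLin, lapLin, LinearMap.coe_mk, AddHom.coe_mk]
  rw [Finset.sum_comm]
  have : ∀ w, ∑ v, y w * (lapCol G w v : ℚ) = 0 := by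
    intro w
    rw [← Finset.mul_sum]
    have : ∑ v, (lapCol G w v : ℚ) = ((∑ v, lapCol G w v : ℤ) : ℚ) := by push_cast; rfl
    rw [this, lapCol_col_sum G w]
    simp
  simp [this]

lemma ker_lapLin (hG : G.Connected) :
    LinearMap.ker (lapLin G) = Submodule.span ℚ {(fun _ => 1 : VG → ℚ)} := by
  apply le_antisymm
  · intro x hx
    simp only [LinearMap.mem_ker, lapLin, LinearMap.coe_mk, AddHom.coe_mk] at hx
    have hx' : ∀ v, ∑ w, x w * (lapCol G w v : ℚ) = 0 := fun v => congrFun hx v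
    obtain v0 := Classical.arbitrary VG
    have : x = x v0 • (fun _ => 1 : VG → ℚ) := by
      funext v; simp [lap_ker_const G hG x hx' v v0]
    rw [this]
    exact Submodule.smul_mem _ _ (Submodule.mem_span_singleton_self _)
  · rw [Submodule.span_le, Set.singleton_subset_iff]
    simp only [SetLike.mem_coe, LinearMap.mem_ker, lapLin, LinearMap.coe_mk, AddHom.coe_mk]
    funext v
    have := lapCol_row_expand G (fun _ => 1 : VG → ℚ) v
    simpa using this

lemma range_lapLin_eq (hG : G.Connected) :
    LinearMap.range (lapLin G) = LinearMap.ker (sumLin (VG := VG)) := by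
  have hone : (fun _ => 1 : VG → ℚ) ≠ 0 := by
    intro h
    have := congrFun h (Classical.arbitrary VG)
    simp at this
  have hker1 : Module.finrank ℚ (LinearMap.ker (lapLin G)) = 1 := by
    rw [ker_lapLin G hG]
    exact finrank_span_singleton hone
  have hsurj : LinearMap.range (sumLin (VG := VG)) = ⊤ := by
    rw [LinearMap.range_eq_top]
    intro c
    classical
    refine ⟨fun v => if v = Classical.arbitrary VG then c else 0, ?_⟩
    simp [sumLin]
  have h1 := LinearMap.finrank_range_add_finrank_ker (lapLin G)
  have h2 := LinearMap.finrank_range_add_finrank_ker (sumLin (VG := VG))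
  rw [hsurj, hker1] at *
  have hrk : Module.finrank ℚ (⊤ : Submodule ℚ ℚ) = 1 := by simp
  rw [hrk] at h2
  apply Submodule.eq_of_le_of_finrank_le (range_lapLin_le G)
  omega

/-- main integer clearing-denominator lemma -/
lemma exists_smul_mem_closure (hG : G.Connected) (D : VG → ℤ) (hD : ∑ v, D v = 0) :
    ∃ m : ℤ, m ≠ 0 ∧
      (m • D) ∈ AddSubgroup.closure {E : VG → ℤ | ∃ w, E = lapCol G w} := by
  classical
  have hmem : (fun v => (D v : ℚ)) ∈ LinearMap.ker (sumLin (VG := VG)) := by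
    simp only [LinearMap.mem_ker, sumLin, LinearMap.coe_mk, AddHom.coe_mk]
    have : ∑ v, (D v : ℚ) = ((∑ v, D v : ℤ) : ℚ) := by push_cast; rfl
    rw [this, hD]; simp
  rw [← range_lapLin_eq G hG] at hmem
  obtain ⟨y, hy⟩ := hmem
  set m : ℤ := ∏ w, ((y w).den : ℤ) with hm
  have hden : ∀ w, ((y w).den : ℤ) ∣ m := fun w => Finset.dvd_prod_of_mem _ (Finset.mem_univ w)
  have hm0 : m ≠ 0 := by
    rw [hm]
    apply Finset.prod_ne_zero_iff.2
    intro w _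
    exact_mod_cast (y w).den_nz
  have hint : ∀ w, ∃ z : ℤ, (z : ℚ) = (m : ℚ) * y w := by
    intro w
    obtain ⟨k, hk⟩ := hden w
    refine ⟨k * (y w).num, ?_⟩
    have hd : ((y w).den : ℚ) ≠ 0 := by exact_mod_cast (y w).den_nz
    have : (m : ℚ) = (k : ℚ) * ((y w).den : ℚ) := by rw [hk]; push_cast; ring
    rw [this]
    rw [mul_assoc, mul_comm ((y w).den : ℚ) (y w)]
    rw [Rat.mul_den_eq_num]
    push_cast; ring
  choose f hf using hint
  have hkey : ∀ v, (m • D) v = ∑ w, f w * lapCol G w v := by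
    intro v
    have hQ : ((m • D) v : ℚ) = ((∑ w, f w * lapCol G w v : ℤ) : ℚ) := by
      simp only [Pi.smul_apply, smul_eq_mul]
      push_cast
      have hv := congrFun hy v
      simp only [lapLin, LinearMap.coe_mk, AddHom.coe_mk] at hv
      calc (m : ℚ) * (D v : ℚ) = (m : ℚ) * ∑ w, y w * (lapCol G w v : ℚ) := by rw [hv]
        _ = ∑ w, ((m : ℚ) * y w) * (lapCol G w v : ℚ) := by rw [Finset.mul_sum]; congr 1; funext w; ring
        _ = ∑ w, (f w : ℚ) * (lapCol G w v : ℚ) := by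
            refine Finset.sum_congr rfl fun w _ => ?_; rw [hf w]
    exact_mod_cast hQ
  refine ⟨m, hm0, ?_⟩
  have : m • D = ∑ w, f w • lapCol G w := by
    funext v
    rw [hkey v]
    simp [Finset.sum_apply]
  rw [this]
  apply AddSubgroup.sum_mem
  intro w _
  have hw : lapCol G w ∈ {E : VG → ℤ | ∃ w, E = lapCol G w} := ⟨w, rfl⟩
  exact AddSubgroup.zsmul_mem _ (AddSubgroup.subset_closure hw) _

end LA

/-- For every finite connected simple graph `G` (with at least one
vertex), the Picard group of `G` — the quotient of the group of divisors on `G` by the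
subgroup generated by the columns of the Laplacian matrix — is isomorphic to `ℤ × K`
for some finite abelian group `K`. -/
theorem pic_graph_iso {VG : Type*} [Fintype VG] [Nonempty VG]
    (G : SimpleGraph VG) (hG : G.Connected) :
    ∃ K : AddSubgroup
        ((VG → ℤ) ⧸ AddSubgroup.closure {D : VG → ℤ | ∃ w, D = lapCol G w}),
      Finite K ∧
      Nonempty
        (((VG → ℤ) ⧸ AddSubgroup.closure {D : VG → ℤ | ∃ w, D = lapCol G w}) ≃+
          ℤ × K) := by
  classical
  set L : AddSubgroup (VG → ℤ) := AddSubgroup.closure {D : VG → ℤ | ∃ w, D = lapCol G w}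
    with hL
  let degH : (VG → ℤ) →+ ℤ :=
    AddMonoidHom.mk' (fun D => ∑ v, D v) (fun a b => by simp [Finset.sum_add_distrib])
  have hLker : L ≤ degH.ker := by
    rw [hL, AddSubgroup.closure_le]
    rintro D ⟨w, rfl⟩
    simpa [degH, AddMonoidHom.mem_ker] using lapCol_col_sum G w
  let dbar : ((VG → ℤ) ⧸ L) →+ ℤ := QuotientAddGroup.lift L degH hLker
  let v0 : VG := Classical.arbitrary VG
  let e0 : VG → ℤ := fun v => if v = v0 then 1 else 0
  set x0 : (VG → ℤ) ⧸ L := QuotientAddGroup.mk e0 with hx0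
  have hd0 : dbar x0 = 1 := by
    rw [hx0]
    show degH e0 = 1
    simp [degH, e0]
  set K := dbar.ker with hK
  have htor : AddMonoid.IsTorsion K := by
    rintro ⟨x, hx⟩
    obtain ⟨D, rfl⟩ := QuotientAddGroup.mk_surjective x
    rw [AddMonoidHom.mem_ker] at hx
    have hD : ∑ v, D v = 0 := by simpa [dbar, degH] using hx
    obtain ⟨m, hm, hmem⟩ := exists_smul_mem_closure G hG D hD
    rw [isOfFinAddOrder_iff_zsmul_eq_zero]
    refine ⟨m, hm, ?_⟩
    apply Subtype.ext
    show m • (QuotientAddGroup.mk D : (VG → ℤ) ⧸ L) = 0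
    have : m • (QuotientAddGroup.mk D : (VG → ℤ) ⧸ L)
        = QuotientAddGroup.mk (m • D) := rfl
    rw [this]
    exact (QuotientAddGroup.eq_zero_iff _).mpr hmem
  haveI : IsNoetherian ℤ ((VG → ℤ) ⧸ L) := by
    apply isNoetherian_of_surjective (QuotientAddGroup.mk' L).toIntLinearMap
    rw [LinearMap.range_eq_top]
    exact fun x => QuotientAddGroup.mk'_surjective L x
  have hfgsub : (AddSubgroup.toIntSubmodule K).FG := IsNoetherian.noetherian _
  have hKfg : AddGroup.FG K := by
    rw [AddGroup.fg_iff_addSubgroup_fg]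
    have := (Submodule.fg_iff_addSubgroup_fg _).mp hfgsub
    simpa using this
  have hKfin : Finite K := AddCommGroup.finite_of_fg_torsion K htor
  refine ⟨K, hKfin, ⟨?_⟩⟩
  refine
    { toFun := fun x => (dbar x, ⟨x - dbar x • x0, ?_⟩)
      invFun := fun p => p.1 • x0 + (p.2 : (VG → ℤ) ⧸ L)
      left_inv := ?_
      right_inv := ?_
      map_add' := ?_ }
  · rw [AddMonoidHom.mem_ker, map_sub, map_zsmul, hd0]
    simp
  · intro x
    show dbar x • x0 + (x - dbar x • x0) = x
    abel
  · rintro ⟨n, k⟩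
    have hk : dbar (k : (VG → ℤ) ⧸ L) = 0 := k.2
    have h1 : dbar (n • x0 + (k : (VG → ℤ) ⧸ L)) = n := by
      rw [map_add, map_zsmul, hd0, hk]; simp
    refine Prod.ext ?_ ?_
    · exact h1
    · apply Subtype.ext
      show (n • x0 + (k : (VG → ℤ) ⧸ L)) - dbar (n • x0 + (k : (VG → ℤ) ⧸ L)) • x0
          = (k : (VG → ℤ) ⧸ L)
      rw [h1]
      abel
  · intro x y
    refine Prod.ext (by simp) ?_
    apply Subtype.ext
    show (x + y) - dbar (x + y) • x0
        = ((x - dbar x • x0) + (y - dbar y • x0) : (VG → ℤ) ⧸ L)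
    rw [map_add, add_zsmul]
    abel
end

section
/- The all-ones divisor C on the triangulated product Δ (i.e., C(r) = 1 for every edge r of Δ) is ℚ-Cartier if and only if for every vertex (a,b) of Δ: the number of c∈V(H) with {(a,b),(x,c)}∈E(Δ) is the same for every neighbor x of a in G, and the number of c∈V(G) with {(a,b),(c,y)}∈E(Δ) is the same for every neighbor y of b in H. -/
open scoped Classical
open Finset

lemma face_cases {α : Type*} [DecidableEq α] {u v w p q r : α}
    (hpq : p ≠ q) (hpr : p ≠ r) (hqr : q ≠ r) (huv : u ≠ v)
    (hset : ({u, v, w} : Finset α) = {p, q, r}) :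
    (u = p ∧ v = q ∧ w = r) ∨ (u = p ∧ v = r ∧ w = q) ∨ (u = q ∧ v = p ∧ w = r) ∨
    (u = q ∧ v = r ∧ w = p) ∨ (u = r ∧ v = p ∧ w = q) ∨ (u = r ∧ v = q ∧ w = p) := by
  have hmem : ∀ z : α, (z = u ∨ z = v ∨ z = w) ↔ (z = p ∨ z = q ∨ z = r) := by
    intro z
    have := Finset.ext_iff.mp hset z
    simpa using this
  have hu : u = p ∨ u = q ∨ u = r := (hmem u).mp (Or.inl rfl)
  have hv : v = p ∨ v = q ∨ v = r := (hmem v).mp (Or.inr (Or.inl rfl))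
  have hp : p = u ∨ p = v ∨ p = w := (hmem p).mpr (Or.inl rfl)
  have hq : q = u ∨ q = v ∨ q = w := (hmem q).mpr (Or.inr (Or.inl rfl))
  have hr : r = u ∨ r = v ∨ r = w := (hmem r).mpr (Or.inr (Or.inr rfl))
  rcases hu with hu | hu | hu <;> rcases hv with hv | hv | hv
  · exact absurd (hu.trans hv.symm) huv
  · refine Or.inl ⟨hu, hv, ?_⟩
    rcases hr with h | h | h
    · exact absurd (h.trans hu) hpr.symm
    · exact absurd (h.trans hv) hqr.symm
    · exact h.symm
  · refine Or.inr (Or.inl ⟨hu, hv, ?_⟩)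
    rcases hq with h | h | h
    · exact absurd (h.trans hu) hpq.symm
    · exact absurd (h.trans hv) hqr
    · exact h.symm
  · refine Or.inr (Or.inr (Or.inl ⟨hu, hv, ?_⟩))
    rcases hr with h | h | h
    · exact absurd (h.trans hu) hqr.symm
    · exact absurd (h.trans hv) hpr.symm
    · exact h.symm
  · exact absurd (hu.trans hv.symm) huv
  · refine Or.inr (Or.inr (Or.inr (Or.inl ⟨hu, hv, ?_⟩)))
    rcases hp with h | h | h
    · exact absurd (h.trans hu) hpq
    · exact absurd (h.trans hv) hpr
    · exact h.symm
  · refine Or.inr (Or.inr (Or.inr (Or.inr (Or.inl ⟨hu, hv, ?_⟩))))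
    rcases hq with h | h | h
    · exact absurd (h.trans hu) hqr
    · exact absurd (h.trans hv) hpq.symm
    · exact h.symm
  · refine Or.inr (Or.inr (Or.inr (Or.inr (Or.inr ⟨hu, hv, ?_⟩))))
    rcases hp with h | h | h
    · exact absurd (h.trans hu) hpr
    · exact absurd (h.trans hv) hpq
    · exact h.symm
  · exact absurd (hu.trans hv.symm) huv

section Aux2
variable {VG VH : Type*} {G : SimpleGraph VG} {H : SimpleGraph VH} (T : TriProd G H)

namespace TriProd

lemma diag_fst_ne {a x : VG} {b c : VH} (h : T.diag (a, b) (x, c)) : a ≠ x :=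
  (T.diag_adj _ _ _ _ h).1.ne

lemma diag_snd_ne {a x : VG} {b c : VH} (h : T.diag (a, b) (x, c)) : b ≠ c :=
  (T.diag_adj _ _ _ _ h).2.ne

lemma diag_face_iff {a x : VG} {b c : VH} (hd : T.diag (a, b) (x, c)) (w : VG × VH) :
    T.IsFace (a, b) (x, c) w ↔ w = (x, b) ∨ w = (a, c) := by
  have hneuv : ((a, b) : VG × VH) ≠ (x, c) := by
    have := T.diag_fst_ne hd; simp [Prod.ext_iff]; tauto
  constructor
  · rintro ⟨A, A', B, B', hAd, hset⟩
    have hA : A ≠ A' := T.diag_fst_ne hAd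
    have hB : B ≠ B' := T.diag_snd_ne hAd
    have hne := T.diag_snd_ne hd
    have hpq : ((A, B) : VG × VH) ≠ (A', B') := by simp [Prod.ext_iff]; tauto
    have hpr : ((A, B) : VG × VH) ≠ (A', B) := by simp [Prod.ext_iff, hA]
    have hqr : ((A', B') : VG × VH) ≠ (A', B) := by simp [Prod.ext_iff, hB.symm]
    have huv := hneuv
    rcases face_cases hpq hpr hqr huv hset with
      ⟨h1, h2, h3⟩ | ⟨h1, h2, h3⟩ | ⟨h1, h2, h3⟩ | ⟨h1, h2, h3⟩ | ⟨h1, h2, h3⟩ | ⟨h1, h2, h3⟩ <;>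
        simp only [Prod.mk.injEq] at h1 h2 <;>
        obtain ⟨h1a, h1b⟩ := h1 <;> obtain ⟨h2a, h2b⟩ := h2 <;> subst_vars <;>
      first
        | exact absurd rfl hA
        | exact absurd rfl hB
        | exact absurd rfl hx1
        | exact absurd rfl hx2
        | exact (hne rfl).elim
        | exact Or.inl h3
        | exact Or.inr h3
        | exact Or.inl ⟨_, hAd, h3⟩
        | exact Or.inr ⟨_, T.diag_symm _ _ hAd, h3⟩
        | exact Or.inl ⟨_, T.diag_symm _ _ hAd, h3⟩
        | exact Or.inr ⟨_, hAd, h3⟩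
        | exact ⟨_, hAd, h3⟩
        | exact ⟨_, T.diag_symm _ _ hAd, h3⟩
        | exact Or.inl rfl
        | exact Or.inr rfl
        | exact Or.inl ⟨_, hAd, rfl⟩
        | exact Or.inr ⟨_, T.diag_symm _ _ hAd, rfl⟩
        | exact Or.inl ⟨_, T.diag_symm _ _ hAd, rfl⟩
        | exact Or.inr ⟨_, hAd, rfl⟩
        | exact ⟨_, hAd, rfl⟩
        | exact ⟨_, T.diag_symm _ _ hAd, rfl⟩
        | exact (T.diag_fst_ne hd rfl).elim
        | exact (T.diag_snd_ne hd rfl).elim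
  · rintro (rfl | rfl)
    · exact ⟨a, x, b, c, hd, rfl⟩
    · refine ⟨x, a, c, b, T.diag_symm _ _ hd, ?_⟩
      ext z; simp only [Finset.mem_insert, Finset.mem_singleton]; tauto

lemma horiz_face_iff {a x : VG} {b : VH} (hax : G.Adj a x) (w : VG × VH) :
    T.IsFace (a, b) (x, b) w ↔
      (∃ c, T.diag (a, b) (x, c) ∧ w = (x, c)) ∨ (∃ c, T.diag (a, c) (x, b) ∧ w = (a, c)) := by
  have hneuv : ((a, b) : VG × VH) ≠ (x, b) := by simp [Prod.ext_iff, hax.ne]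
  constructor
  · rintro ⟨A, A', B, B', hAd, hset⟩
    have hA : A ≠ A' := T.diag_fst_ne hAd
    have hB : B ≠ B' := T.diag_snd_ne hAd
    have hne := hax.ne
    have hpq : ((A, B) : VG × VH) ≠ (A', B') := by simp [Prod.ext_iff]; tauto
    have hpr : ((A, B) : VG × VH) ≠ (A', B) := by simp [Prod.ext_iff, hA]
    have hqr : ((A', B') : VG × VH) ≠ (A', B) := by simp [Prod.ext_iff, hB.symm]
    have huv := hneuv
    rcases face_cases hpq hpr hqr huv hset with
      ⟨h1, h2, h3⟩ | ⟨h1, h2, h3⟩ | ⟨h1, h2, h3⟩ | ⟨h1, h2, h3⟩ | ⟨h1, h2, h3⟩ | ⟨h1, h2, h3⟩ <;>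
        simp only [Prod.mk.injEq] at h1 h2 <;>
        obtain ⟨h1a, h1b⟩ := h1 <;> obtain ⟨h2a, h2b⟩ := h2 <;> subst_vars <;>
      first
        | exact absurd rfl hA
        | exact absurd rfl hB
        | exact absurd rfl hx1
        | exact absurd rfl hx2
        | exact (hne rfl).elim
        | exact Or.inl h3
        | exact Or.inr h3
        | exact Or.inl ⟨_, hAd, h3⟩
        | exact Or.inr ⟨_, T.diag_symm _ _ hAd, h3⟩
        | exact Or.inl ⟨_, T.diag_symm _ _ hAd, h3⟩
        | exact Or.inr ⟨_, hAd, h3⟩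
        | exact ⟨_, hAd, h3⟩
        | exact ⟨_, T.diag_symm _ _ hAd, h3⟩
        | exact Or.inl rfl
        | exact Or.inr rfl
        | exact Or.inl ⟨_, hAd, rfl⟩
        | exact Or.inr ⟨_, T.diag_symm _ _ hAd, rfl⟩
        | exact Or.inl ⟨_, T.diag_symm _ _ hAd, rfl⟩
        | exact Or.inr ⟨_, hAd, rfl⟩
        | exact ⟨_, hAd, rfl⟩
        | exact ⟨_, T.diag_symm _ _ hAd, rfl⟩
        | exact (T.diag_fst_ne hd rfl).elim
        | exact (T.diag_snd_ne hd rfl).elim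
  · rintro (⟨c, hd, rfl⟩ | ⟨c, hd, rfl⟩)
    · refine ⟨a, x, b, c, hd, ?_⟩
      ext z; simp only [Finset.mem_insert, Finset.mem_singleton]; tauto
    · refine ⟨x, a, b, c, T.diag_symm _ _ hd, ?_⟩
      ext z; simp only [Finset.mem_insert, Finset.mem_singleton]; tauto

lemma horiz_avoidC_iff {a x : VG} {b : VH} (hax : G.Adj a x) (w : VG × VH) :
    T.IsFaceAvoiding (a, b) (x, b) w (a, b) ↔
      ∃ c, T.diag (a, c) (x, b) ∧ w = (a, c) := by
  have hneuv : ((a, b) : VG × VH) ≠ (x, b) := by simp [Prod.ext_iff, hax.ne]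
  constructor
  · rintro ⟨A, A', B, B', hAd, hset, hx1, hx2⟩
    have hA : A ≠ A' := T.diag_fst_ne hAd
    have hB : B ≠ B' := T.diag_snd_ne hAd
    have hne := hax.ne
    have hpq : ((A, B) : VG × VH) ≠ (A', B') := by simp [Prod.ext_iff]; tauto
    have hpr : ((A, B) : VG × VH) ≠ (A', B) := by simp [Prod.ext_iff, hA]
    have hqr : ((A', B') : VG × VH) ≠ (A', B) := by simp [Prod.ext_iff, hB.symm]
    have huv := hneuv
    rcases face_cases hpq hpr hqr huv hset with
      ⟨h1, h2, h3⟩ | ⟨h1, h2, h3⟩ | ⟨h1, h2, h3⟩ | ⟨h1, h2, h3⟩ | ⟨h1, h2, h3⟩ | ⟨h1, h2, h3⟩ <;>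
        simp only [Prod.mk.injEq] at h1 h2 <;>
        obtain ⟨h1a, h1b⟩ := h1 <;> obtain ⟨h2a, h2b⟩ := h2 <;> subst_vars <;>
      first
        | exact absurd rfl hA
        | exact absurd rfl hB
        | exact absurd rfl hx1
        | exact absurd rfl hx2
        | exact (hne rfl).elim
        | exact Or.inl h3
        | exact Or.inr h3
        | exact Or.inl ⟨_, hAd, h3⟩
        | exact Or.inr ⟨_, T.diag_symm _ _ hAd, h3⟩
        | exact Or.inl ⟨_, T.diag_symm _ _ hAd, h3⟩
        | exact Or.inr ⟨_, hAd, h3⟩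
        | exact ⟨_, hAd, h3⟩
        | exact ⟨_, T.diag_symm _ _ hAd, h3⟩
        | exact Or.inl rfl
        | exact Or.inr rfl
        | exact Or.inl ⟨_, hAd, rfl⟩
        | exact Or.inr ⟨_, T.diag_symm _ _ hAd, rfl⟩
        | exact Or.inl ⟨_, T.diag_symm _ _ hAd, rfl⟩
        | exact Or.inr ⟨_, hAd, rfl⟩
        | exact ⟨_, hAd, rfl⟩
        | exact ⟨_, T.diag_symm _ _ hAd, rfl⟩
        | exact (T.diag_fst_ne hd rfl).elim
        | exact (T.diag_snd_ne hd rfl).elim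
  · rintro ⟨c, hd, rfl⟩
    refine ⟨x, a, b, c, T.diag_symm _ _ hd, ?_, ?_, ?_⟩
    · ext z; simp only [Finset.mem_insert, Finset.mem_singleton]; tauto
    · simp [Prod.ext_iff, hax.ne]
    · have := T.diag_snd_ne hd
      simp [Prod.ext_iff]; tauto

lemma horiz_avoidO_iff {a x : VG} {b : VH} (hax : G.Adj a x) (w : VG × VH) :
    T.IsFaceAvoiding (a, b) (x, b) w (x, b) ↔
      ∃ c, T.diag (a, b) (x, c) ∧ w = (x, c) := by
  have hneuv : ((a, b) : VG × VH) ≠ (x, b) := by simp [Prod.ext_iff, hax.ne]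
  constructor
  · rintro ⟨A, A', B, B', hAd, hset, hx1, hx2⟩
    have hA : A ≠ A' := T.diag_fst_ne hAd
    have hB : B ≠ B' := T.diag_snd_ne hAd
    have hne := hax.ne
    have hpq : ((A, B) : VG × VH) ≠ (A', B') := by simp [Prod.ext_iff]; tauto
    have hpr : ((A, B) : VG × VH) ≠ (A', B) := by simp [Prod.ext_iff, hA]
    have hqr : ((A', B') : VG × VH) ≠ (A', B) := by simp [Prod.ext_iff, hB.symm]
    have huv := hneuv
    rcases face_cases hpq hpr hqr huv hset with
      ⟨h1, h2, h3⟩ | ⟨h1, h2, h3⟩ | ⟨h1, h2, h3⟩ | ⟨h1, h2, h3⟩ | ⟨h1, h2, h3⟩ | ⟨h1, h2, h3⟩ <;>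
        simp only [Prod.mk.injEq] at h1 h2 <;>
        obtain ⟨h1a, h1b⟩ := h1 <;> obtain ⟨h2a, h2b⟩ := h2 <;> subst_vars <;>
      first
        | exact absurd rfl hA
        | exact absurd rfl hB
        | exact absurd rfl hx1
        | exact absurd rfl hx2
        | exact (hne rfl).elim
        | exact Or.inl h3
        | exact Or.inr h3
        | exact Or.inl ⟨_, hAd, h3⟩
        | exact Or.inr ⟨_, T.diag_symm _ _ hAd, h3⟩
        | exact Or.inl ⟨_, T.diag_symm _ _ hAd, h3⟩
        | exact Or.inr ⟨_, hAd, h3⟩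
        | exact ⟨_, hAd, h3⟩
        | exact ⟨_, T.diag_symm _ _ hAd, h3⟩
        | exact Or.inl rfl
        | exact Or.inr rfl
        | exact Or.inl ⟨_, hAd, rfl⟩
        | exact Or.inr ⟨_, T.diag_symm _ _ hAd, rfl⟩
        | exact Or.inl ⟨_, T.diag_symm _ _ hAd, rfl⟩
        | exact Or.inr ⟨_, hAd, rfl⟩
        | exact ⟨_, hAd, rfl⟩
        | exact ⟨_, T.diag_symm _ _ hAd, rfl⟩
        | exact (T.diag_fst_ne hd rfl).elim
        | exact (T.diag_snd_ne hd rfl).elim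
  · rintro ⟨c, hd, rfl⟩
    refine ⟨a, x, b, c, hd, ?_, ?_, ?_⟩
    · ext z; simp only [Finset.mem_insert, Finset.mem_singleton]; tauto
    · simp [Prod.ext_iff]; intro h; exact absurd h.symm hax.ne
    · have := T.diag_snd_ne hd
      simp [Prod.ext_iff]; tauto

lemma vert_face_iff {a : VG} {b y : VH} (hby : H.Adj b y) (w : VG × VH) :
    T.IsFace (a, b) (a, y) w ↔
      (∃ c, T.diag (a, b) (c, y) ∧ w = (c, y)) ∨ (∃ c, T.diag (c, b) (a, y) ∧ w = (c, b)) := by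
  have hneuv : ((a, b) : VG × VH) ≠ (a, y) := by simp [Prod.ext_iff, hby.ne]
  constructor
  · rintro ⟨A, A', B, B', hAd, hset⟩
    have hA : A ≠ A' := T.diag_fst_ne hAd
    have hB : B ≠ B' := T.diag_snd_ne hAd
    have hne := hby.ne
    have hpq : ((A, B) : VG × VH) ≠ (A', B') := by simp [Prod.ext_iff]; tauto
    have hpr : ((A, B) : VG × VH) ≠ (A', B) := by simp [Prod.ext_iff, hA]
    have hqr : ((A', B') : VG × VH) ≠ (A', B) := by simp [Prod.ext_iff, hB.symm]
    have huv := hneuv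
    rcases face_cases hpq hpr hqr huv hset with
      ⟨h1, h2, h3⟩ | ⟨h1, h2, h3⟩ | ⟨h1, h2, h3⟩ | ⟨h1, h2, h3⟩ | ⟨h1, h2, h3⟩ | ⟨h1, h2, h3⟩ <;>
        simp only [Prod.mk.injEq] at h1 h2 <;>
        obtain ⟨h1a, h1b⟩ := h1 <;> obtain ⟨h2a, h2b⟩ := h2 <;> subst_vars <;>
      first
        | exact absurd rfl hA
        | exact absurd rfl hB
        | exact absurd rfl hx1
        | exact absurd rfl hx2
        | exact (hne rfl).elim
        | exact Or.inl h3
        | exact Or.inr h3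
        | exact Or.inl ⟨_, hAd, h3⟩
        | exact Or.inr ⟨_, T.diag_symm _ _ hAd, h3⟩
        | exact Or.inl ⟨_, T.diag_symm _ _ hAd, h3⟩
        | exact Or.inr ⟨_, hAd, h3⟩
        | exact ⟨_, hAd, h3⟩
        | exact ⟨_, T.diag_symm _ _ hAd, h3⟩
        | exact Or.inl rfl
        | exact Or.inr rfl
        | exact Or.inl ⟨_, hAd, rfl⟩
        | exact Or.inr ⟨_, T.diag_symm _ _ hAd, rfl⟩
        | exact Or.inl ⟨_, T.diag_symm _ _ hAd, rfl⟩
        | exact Or.inr ⟨_, hAd, rfl⟩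
        | exact ⟨_, hAd, rfl⟩
        | exact ⟨_, T.diag_symm _ _ hAd, rfl⟩
        | exact (T.diag_fst_ne hd rfl).elim
        | exact (T.diag_snd_ne hd rfl).elim
  · rintro (⟨c, hd, rfl⟩ | ⟨c, hd, rfl⟩)
    · refine ⟨c, a, y, b, T.diag_symm _ _ hd, ?_⟩
      ext z; simp only [Finset.mem_insert, Finset.mem_singleton]; tauto
    · refine ⟨c, a, b, y, hd, ?_⟩
      ext z; simp only [Finset.mem_insert, Finset.mem_singleton]; tauto

lemma vert_avoidC_iff {a : VG} {b y : VH} (hby : H.Adj b y) (w : VG × VH) :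
    T.IsFaceAvoiding (a, b) (a, y) w (a, b) ↔
      ∃ c, T.diag (c, b) (a, y) ∧ w = (c, b) := by
  have hneuv : ((a, b) : VG × VH) ≠ (a, y) := by simp [Prod.ext_iff, hby.ne]
  constructor
  · rintro ⟨A, A', B, B', hAd, hset, hx1, hx2⟩
    have hA : A ≠ A' := T.diag_fst_ne hAd
    have hB : B ≠ B' := T.diag_snd_ne hAd
    have hne := hby.ne
    have hpq : ((A, B) : VG × VH) ≠ (A', B') := by simp [Prod.ext_iff]; tauto
    have hpr : ((A, B) : VG × VH) ≠ (A', B) := by simp [Prod.ext_iff, hA]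
    have hqr : ((A', B') : VG × VH) ≠ (A', B) := by simp [Prod.ext_iff, hB.symm]
    have huv := hneuv
    rcases face_cases hpq hpr hqr huv hset with
      ⟨h1, h2, h3⟩ | ⟨h1, h2, h3⟩ | ⟨h1, h2, h3⟩ | ⟨h1, h2, h3⟩ | ⟨h1, h2, h3⟩ | ⟨h1, h2, h3⟩ <;>
        simp only [Prod.mk.injEq] at h1 h2 <;>
        obtain ⟨h1a, h1b⟩ := h1 <;> obtain ⟨h2a, h2b⟩ := h2 <;> subst_vars <;>
      first
        | exact absurd rfl hA
        | exact absurd rfl hB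
        | exact absurd rfl hx1
        | exact absurd rfl hx2
        | exact (hne rfl).elim
        | exact Or.inl h3
        | exact Or.inr h3
        | exact Or.inl ⟨_, hAd, h3⟩
        | exact Or.inr ⟨_, T.diag_symm _ _ hAd, h3⟩
        | exact Or.inl ⟨_, T.diag_symm _ _ hAd, h3⟩
        | exact Or.inr ⟨_, hAd, h3⟩
        | exact ⟨_, hAd, h3⟩
        | exact ⟨_, T.diag_symm _ _ hAd, h3⟩
        | exact Or.inl rfl
        | exact Or.inr rfl
        | exact Or.inl ⟨_, hAd, rfl⟩
        | exact Or.inr ⟨_, T.diag_symm _ _ hAd, rfl⟩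
        | exact Or.inl ⟨_, T.diag_symm _ _ hAd, rfl⟩
        | exact Or.inr ⟨_, hAd, rfl⟩
        | exact ⟨_, hAd, rfl⟩
        | exact ⟨_, T.diag_symm _ _ hAd, rfl⟩
        | exact (T.diag_fst_ne hd rfl).elim
        | exact (T.diag_snd_ne hd rfl).elim
  · rintro ⟨c, hd, rfl⟩
    refine ⟨c, a, b, y, hd, ?_, ?_, ?_⟩
    · ext z; simp only [Finset.mem_insert, Finset.mem_singleton]; tauto
    · have := T.diag_fst_ne hd
      simp [Prod.ext_iff]; tauto
    · simp [Prod.ext_iff, hby.ne]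

lemma vert_avoidO_iff {a : VG} {b y : VH} (hby : H.Adj b y) (w : VG × VH) :
    T.IsFaceAvoiding (a, b) (a, y) w (a, y) ↔
      ∃ c, T.diag (a, b) (c, y) ∧ w = (c, y) := by
  have hneuv : ((a, b) : VG × VH) ≠ (a, y) := by simp [Prod.ext_iff, hby.ne]
  constructor
  · rintro ⟨A, A', B, B', hAd, hset, hx1, hx2⟩
    have hA : A ≠ A' := T.diag_fst_ne hAd
    have hB : B ≠ B' := T.diag_snd_ne hAd
    have hne := hby.ne
    have hpq : ((A, B) : VG × VH) ≠ (A', B') := by simp [Prod.ext_iff]; tauto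
    have hpr : ((A, B) : VG × VH) ≠ (A', B) := by simp [Prod.ext_iff, hA]
    have hqr : ((A', B') : VG × VH) ≠ (A', B) := by simp [Prod.ext_iff, hB.symm]
    have huv := hneuv
    rcases face_cases hpq hpr hqr huv hset with
      ⟨h1, h2, h3⟩ | ⟨h1, h2, h3⟩ | ⟨h1, h2, h3⟩ | ⟨h1, h2, h3⟩ | ⟨h1, h2, h3⟩ | ⟨h1, h2, h3⟩ <;>
        simp only [Prod.mk.injEq] at h1 h2 <;>
        obtain ⟨h1a, h1b⟩ := h1 <;> obtain ⟨h2a, h2b⟩ := h2 <;> subst_vars <;>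
      first
        | exact absurd rfl hA
        | exact absurd rfl hB
        | exact absurd rfl hx1
        | exact absurd rfl hx2
        | exact (hne rfl).elim
        | exact Or.inl h3
        | exact Or.inr h3
        | exact Or.inl ⟨_, hAd, h3⟩
        | exact Or.inr ⟨_, T.diag_symm _ _ hAd, h3⟩
        | exact Or.inl ⟨_, T.diag_symm _ _ hAd, h3⟩
        | exact Or.inr ⟨_, hAd, h3⟩
        | exact ⟨_, hAd, h3⟩
        | exact ⟨_, T.diag_symm _ _ hAd, h3⟩
        | exact Or.inl rfl
        | exact Or.inr rfl
        | exact Or.inl ⟨_, hAd, rfl⟩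
        | exact Or.inr ⟨_, T.diag_symm _ _ hAd, rfl⟩
        | exact Or.inl ⟨_, T.diag_symm _ _ hAd, rfl⟩
        | exact Or.inr ⟨_, hAd, rfl⟩
        | exact ⟨_, hAd, rfl⟩
        | exact ⟨_, T.diag_symm _ _ hAd, rfl⟩
        | exact (T.diag_fst_ne hd rfl).elim
        | exact (T.diag_snd_ne hd rfl).elim
  · rintro ⟨c, hd, rfl⟩
    refine ⟨c, a, y, b, T.diag_symm _ _ hd, ?_, ?_, ?_⟩
    · ext z; simp only [Finset.mem_insert, Finset.mem_singleton]; tauto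
    · have := T.diag_fst_ne hd
      simp [Prod.ext_iff]; tauto
    · simp [Prod.ext_iff, hby.ne']

end TriProd
end Aux2

section Aux3
variable {VG VH : Type*} {G : SimpleGraph VG} {H : SimpleGraph VH} (T : TriProd G H)

namespace TriProd

lemma isFace_comm (u v w : VG × VH) : T.IsFace u v w ↔ T.IsFace v u w := by
  constructor <;>
    · rintro ⟨A, A', B, B', hd, hset⟩
      exact ⟨A, A', B, B', hd, (Finset.insert_comm _ _ _).trans hset⟩

lemma isFaceAvoiding_comm (u v w x : VG × VH) :
    T.IsFaceAvoiding u v w x ↔ T.IsFaceAvoiding v u w x := by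
  constructor <;>
    · rintro ⟨A, A', B, B', hd, hset, hx1, hx2⟩
      exact ⟨A, A', B, B', hd, (Finset.insert_comm _ _ _).trans hset, hx1, hx2⟩

variable [Fintype VG] [Fintype VH]

lemma alpha_comm (u v x : VG × VH) : T.alpha u v x = T.alpha v u x := by
  unfold alpha
  refine if_congr or_comm (if_congr ⟨T.diag_symm u v, T.diag_symm v u⟩ rfl ?_) rfl
  have h : Finset.univ.filter (fun w => T.IsFaceAvoiding u v w x) =
      Finset.univ.filter (fun w => T.IsFaceAvoiding v u w x) :=
    Finset.filter_congr fun w _ => T.isFaceAvoiding_comm u v w x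
  rw [h]

lemma Div_comm (φ : VG × VH → ℤ) (u v : VG × VH) : T.Div φ u v = T.Div φ v u := by
  unfold Div
  have h1 : Finset.univ.filter (fun w => T.IsFace u v w) =
      Finset.univ.filter (fun w => T.IsFace v u w) :=
    Finset.filter_congr fun w _ => T.isFace_comm u v w
  rw [h1, T.alpha_comm u v u, T.alpha_comm u v v]
  ring

lemma alpha_diag_self {a x : VG} {b c : VH} (hd : T.diag (a, b) (x, c)) :
    T.alpha (a, b) (x, c) (a, b) = 1 := by
  unfold alpha; rw [if_pos (Or.inl rfl), if_pos hd]

lemma alpha_diag_other {a x : VG} {b c : VH} (hd : T.diag (a, b) (x, c)) :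
    T.alpha (a, b) (x, c) (x, c) = 1 := by
  unfold alpha; rw [if_pos (Or.inr rfl), if_pos hd]

lemma alpha_horiz_self {a x : VG} {b : VH} (hax : G.Adj a x) :
    T.alpha (a, b) (x, b) (a, b) =
      ((Finset.univ.filter (fun c => T.diag (a, c) (x, b))).card : ℤ) := by
  unfold alpha
  rw [if_pos (Or.inl rfl), if_neg (fun h => T.diag_snd_ne h rfl)]
  congr 1
  have himg : Finset.univ.filter (fun w => T.IsFaceAvoiding (a, b) (x, b) w (a, b)) =
      (Finset.univ.filter (fun c => T.diag (a, c) (x, b))).image (fun c => (a, c)) := by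
    ext w
    simp only [Finset.mem_filter, Finset.mem_univ, true_and, Finset.mem_image,
      T.horiz_avoidC_iff hax]
    constructor
    · rintro ⟨c, hd, rfl⟩; exact ⟨c, hd, rfl⟩
    · rintro ⟨c, hd, rfl⟩; exact ⟨c, hd, rfl⟩
  rw [himg, Finset.card_image_of_injective _ (fun c₁ c₂ h => by simpa using h)]

lemma alpha_horiz_other {a x : VG} {b : VH} (hax : G.Adj a x) :
    T.alpha (a, b) (x, b) (x, b) =
      ((Finset.univ.filter (fun c => T.diag (a, b) (x, c))).card : ℤ) := by
  unfold alpha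
  rw [if_pos (Or.inr rfl), if_neg (fun h => T.diag_snd_ne h rfl)]
  congr 1
  have himg : Finset.univ.filter (fun w => T.IsFaceAvoiding (a, b) (x, b) w (x, b)) =
      (Finset.univ.filter (fun c => T.diag (a, b) (x, c))).image (fun c => (x, c)) := by
    ext w
    simp only [Finset.mem_filter, Finset.mem_univ, true_and, Finset.mem_image,
      T.horiz_avoidO_iff hax]
    constructor
    · rintro ⟨c, hd, rfl⟩; exact ⟨c, hd, rfl⟩
    · rintro ⟨c, hd, rfl⟩; exact ⟨c, hd, rfl⟩
  rw [himg, Finset.card_image_of_injective _ (fun c₁ c₂ h => by simpa using h)]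

lemma alpha_vert_self {a : VG} {b y : VH} (hby : H.Adj b y) :
    T.alpha (a, b) (a, y) (a, b) =
      ((Finset.univ.filter (fun c => T.diag (c, b) (a, y))).card : ℤ) := by
  unfold alpha
  rw [if_pos (Or.inl rfl), if_neg (fun h => T.diag_fst_ne h rfl)]
  congr 1
  have himg : Finset.univ.filter (fun w => T.IsFaceAvoiding (a, b) (a, y) w (a, b)) =
      (Finset.univ.filter (fun c => T.diag (c, b) (a, y))).image (fun c => (c, b)) := by
    ext w
    simp only [Finset.mem_filter, Finset.mem_univ, true_and, Finset.mem_image,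
      T.vert_avoidC_iff hby]
    constructor
    · rintro ⟨c, hd, rfl⟩; exact ⟨c, hd, rfl⟩
    · rintro ⟨c, hd, rfl⟩; exact ⟨c, hd, rfl⟩
  rw [himg, Finset.card_image_of_injective _ (fun c₁ c₂ h => by simpa using h)]

lemma alpha_vert_other {a : VG} {b y : VH} (hby : H.Adj b y) :
    T.alpha (a, b) (a, y) (a, y) =
      ((Finset.univ.filter (fun c => T.diag (a, b) (c, y))).card : ℤ) := by
  unfold alpha
  rw [if_pos (Or.inr rfl), if_neg (fun h => T.diag_fst_ne h rfl)]
  congr 1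
  have himg : Finset.univ.filter (fun w => T.IsFaceAvoiding (a, b) (a, y) w (a, y)) =
      (Finset.univ.filter (fun c => T.diag (a, b) (c, y))).image (fun c => (c, y)) := by
    ext w
    simp only [Finset.mem_filter, Finset.mem_univ, true_and, Finset.mem_image,
      T.vert_avoidO_iff hby]
    constructor
    · rintro ⟨c, hd, rfl⟩; exact ⟨c, hd, rfl⟩
    · rintro ⟨c, hd, rfl⟩; exact ⟨c, hd, rfl⟩
  rw [himg, Finset.card_image_of_injective _ (fun c₁ c₂ h => by simpa using h)]

lemma sum_faces_diag {a x : VG} {b c : VH} (hd : T.diag (a, b) (x, c)) (φ : VG × VH → ℤ) :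
    ∑ w ∈ Finset.univ.filter (fun w => T.IsFace (a, b) (x, c) w), φ w = φ (x, b) + φ (a, c) := by
  have h : Finset.univ.filter (fun w => T.IsFace (a, b) (x, c) w) = {(x, b), (a, c)} := by
    ext w
    simp [T.diag_face_iff hd w]
  rw [h, Finset.sum_pair]
  have := T.diag_fst_ne hd
  simp [Prod.ext_iff]; tauto

lemma sum_faces_horiz {a x : VG} {b : VH} (hax : G.Adj a x) (φ : VG × VH → ℤ) :
    ∑ w ∈ Finset.univ.filter (fun w => T.IsFace (a, b) (x, b) w), φ w =
      (∑ c ∈ Finset.univ.filter (fun c => T.diag (a, b) (x, c)), φ (x, c)) +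
      (∑ c ∈ Finset.univ.filter (fun c => T.diag (a, c) (x, b)), φ (a, c)) := by
  have h : Finset.univ.filter (fun w => T.IsFace (a, b) (x, b) w) =
      ((Finset.univ.filter (fun c => T.diag (a, b) (x, c))).image (fun c => (x, c))) ∪
      ((Finset.univ.filter (fun c => T.diag (a, c) (x, b))).image (fun c => (a, c))) := by
    ext w
    simp only [Finset.mem_filter, Finset.mem_univ, true_and, Finset.mem_union, Finset.mem_image,
      T.horiz_face_iff hax w]
    constructor
    · rintro (⟨c, hd, rfl⟩ | ⟨c, hd, rfl⟩)
      · exact Or.inl ⟨c, hd, rfl⟩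
      · exact Or.inr ⟨c, hd, rfl⟩
    · rintro (⟨c, hd, rfl⟩ | ⟨c, hd, rfl⟩)
      · exact Or.inl ⟨c, hd, rfl⟩
      · exact Or.inr ⟨c, hd, rfl⟩
  have hdisj : Disjoint
      ((Finset.univ.filter (fun c => T.diag (a, b) (x, c))).image (fun c => (x, c)))
      ((Finset.univ.filter (fun c => T.diag (a, c) (x, b))).image (fun c => (a, c))) := by
    rw [Finset.disjoint_left]
    rintro z hz1 hz2
    simp only [Finset.mem_image, Finset.mem_filter, Finset.mem_univ, true_and] at hz1 hz2
    obtain ⟨c1, _, rfl⟩ := hz1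
    obtain ⟨c2, _, h2⟩ := hz2
    simp only [Prod.mk.injEq] at h2
    exact hax.ne h2.1
  rw [h, Finset.sum_union hdisj,
    Finset.sum_image (fun c₁ _ c₂ _ h => by simpa using h),
    Finset.sum_image (fun c₁ _ c₂ _ h => by simpa using h)]

lemma sum_faces_vert {a : VG} {b y : VH} (hby : H.Adj b y) (φ : VG × VH → ℤ) :
    ∑ w ∈ Finset.univ.filter (fun w => T.IsFace (a, b) (a, y) w), φ w =
      (∑ c ∈ Finset.univ.filter (fun c => T.diag (a, b) (c, y)), φ (c, y)) +
      (∑ c ∈ Finset.univ.filter (fun c => T.diag (c, b) (a, y)), φ (c, b)) := by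
  have h : Finset.univ.filter (fun w => T.IsFace (a, b) (a, y) w) =
      ((Finset.univ.filter (fun c => T.diag (a, b) (c, y))).image (fun c => (c, y))) ∪
      ((Finset.univ.filter (fun c => T.diag (c, b) (a, y))).image (fun c => (c, b))) := by
    ext w
    simp only [Finset.mem_filter, Finset.mem_univ, true_and, Finset.mem_union, Finset.mem_image,
      T.vert_face_iff hby w]
    constructor
    · rintro (⟨c, hd, rfl⟩ | ⟨c, hd, rfl⟩)
      · exact Or.inl ⟨c, hd, rfl⟩
      · exact Or.inr ⟨c, hd, rfl⟩
    · rintro (⟨c, hd, rfl⟩ | ⟨c, hd, rfl⟩)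
      · exact Or.inl ⟨c, hd, rfl⟩
      · exact Or.inr ⟨c, hd, rfl⟩
  have hdisj : Disjoint
      ((Finset.univ.filter (fun c => T.diag (a, b) (c, y))).image (fun c => (c, y)))
      ((Finset.univ.filter (fun c => T.diag (c, b) (a, y))).image (fun c => (c, b))) := by
    rw [Finset.disjoint_left]
    rintro z hz1 hz2
    simp only [Finset.mem_image, Finset.mem_filter, Finset.mem_univ, true_and] at hz1 hz2
    obtain ⟨c1, _, rfl⟩ := hz1
    obtain ⟨c2, _, h2⟩ := hz2
    simp only [Prod.mk.injEq] at h2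
    exact hby.ne h2.2
  rw [h, Finset.sum_union hdisj,
    Finset.sum_image (fun c₁ _ c₂ _ h => by simpa using h),
    Finset.sum_image (fun c₁ _ c₂ _ h => by simpa using h)]

lemma Div_diag_edge {a x : VG} {b c : VH} (hd : T.diag (a, b) (x, c)) (φ : VG × VH → ℤ) :
    T.Div φ (a, b) (x, c) = φ (x, b) + φ (a, c) - φ (a, b) - φ (x, c) := by
  unfold Div
  rw [T.sum_faces_diag hd, T.alpha_diag_self hd, T.alpha_diag_other hd]
  ring

lemma Div_horiz_edge {a x : VG} {b : VH} (hax : G.Adj a x) (φ : VG × VH → ℤ) :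
    T.Div φ (a, b) (x, b) =
      (∑ c ∈ Finset.univ.filter (fun c => T.diag (a, b) (x, c)), φ (x, c)) +
      (∑ c ∈ Finset.univ.filter (fun c => T.diag (a, c) (x, b)), φ (a, c)) -
      ((Finset.univ.filter (fun c => T.diag (a, c) (x, b))).card : ℤ) * φ (a, b) -
      ((Finset.univ.filter (fun c => T.diag (a, b) (x, c))).card : ℤ) * φ (x, b) := by
  unfold Div
  rw [T.sum_faces_horiz hax, T.alpha_horiz_self hax, T.alpha_horiz_other hax]
  ring

lemma Div_vert_edge {a : VG} {b y : VH} (hby : H.Adj b y) (φ : VG × VH → ℤ) :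
    T.Div φ (a, b) (a, y) =
      (∑ c ∈ Finset.univ.filter (fun c => T.diag (a, b) (c, y)), φ (c, y)) +
      (∑ c ∈ Finset.univ.filter (fun c => T.diag (c, b) (a, y)), φ (c, b)) -
      ((Finset.univ.filter (fun c => T.diag (c, b) (a, y))).card : ℤ) * φ (a, b) -
      ((Finset.univ.filter (fun c => T.diag (a, b) (c, y))).card : ℤ) * φ (a, y) := by
  unfold Div
  rw [T.sum_faces_vert hby, T.alpha_vert_self hby, T.alpha_vert_other hby]
  ring

lemma horiz_key {a x : VG} {b : VH} (hax : G.Adj a x) (c : VH) :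
    T.diag (a, c) (x, b) ↔ (H.Adj b c ∧ ¬ T.diag (a, b) (x, c)) := by
  constructor
  · intro h
    have hbc : H.Adj b c := ((T.diag_adj _ _ _ _ h).2).symm
    refine ⟨hbc, ?_⟩
    rcases T.diag_choice a x b c hax hbc with ⟨h1, h2⟩ | ⟨h1, h2⟩
    · exact absurd h h2
    · exact h1
  · rintro ⟨hbc, hn⟩
    rcases T.diag_choice a x b c hax hbc with ⟨h1, h2⟩ | ⟨h1, h2⟩
    · exact absurd h1 hn
    · exact h2

lemma vert_key {a : VG} {b y : VH} (hby : H.Adj b y) (c : VG) :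
    T.diag (c, b) (a, y) ↔ (G.Adj a c ∧ ¬ T.diag (a, b) (c, y)) := by
  constructor
  · intro h
    have hac : G.Adj a c := ((T.diag_adj _ _ _ _ h).1).symm
    refine ⟨hac, ?_⟩
    rcases T.diag_choice a c b y hac hby with ⟨h1, h2⟩ | ⟨h1, h2⟩
    · exact absurd (T.diag_symm _ _ h) h2
    · exact h1
  · rintro ⟨hac, hn⟩
    rcases T.diag_choice a c b y hac hby with ⟨h1, h2⟩ | ⟨h1, h2⟩
    · exact absurd h1 hn
    · exact T.diag_symm _ _ h2

lemma sum_split_horiz {a x : VG} {b : VH} (hax : G.Adj a x) (f : VH → ℤ) :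
    (∑ c ∈ Finset.univ.filter (fun c => T.diag (a, b) (x, c)), f c) +
    (∑ c ∈ Finset.univ.filter (fun c => T.diag (a, c) (x, b)), f c) =
    ∑ c ∈ Finset.univ.filter (fun c => H.Adj b c), f c := by
  have h1 : Finset.univ.filter (fun c => T.diag (a, b) (x, c)) =
      (Finset.univ.filter (fun c => H.Adj b c)).filter (fun c => T.diag (a, b) (x, c)) := by
    ext c
    simp only [Finset.mem_filter, Finset.mem_univ, true_and]
    exact ⟨fun h => ⟨(T.diag_adj _ _ _ _ h).2, h⟩, fun h => h.2⟩
  have h2 : Finset.univ.filter (fun c => T.diag (a, c) (x, b)) =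
      (Finset.univ.filter (fun c => H.Adj b c)).filter (fun c => ¬ T.diag (a, b) (x, c)) := by
    ext c
    simp only [Finset.mem_filter, Finset.mem_univ, true_and]
    exact T.horiz_key hax c
  rw [h1, h2]
  exact Finset.sum_filter_add_sum_filter_not _ _ f

lemma sum_split_vert {a : VG} {b y : VH} (hby : H.Adj b y) (f : VG → ℤ) :
    (∑ c ∈ Finset.univ.filter (fun c => T.diag (a, b) (c, y)), f c) +
    (∑ c ∈ Finset.univ.filter (fun c => T.diag (c, b) (a, y)), f c) =
    ∑ c ∈ Finset.univ.filter (fun c => G.Adj a c), f c := by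
  have h1 : Finset.univ.filter (fun c => T.diag (a, b) (c, y)) =
      (Finset.univ.filter (fun c => G.Adj a c)).filter (fun c => T.diag (a, b) (c, y)) := by
    ext c
    simp only [Finset.mem_filter, Finset.mem_univ, true_and]
    exact ⟨fun h => ⟨(T.diag_adj _ _ _ _ h).1, h⟩, fun h => h.2⟩
  have h2 : Finset.univ.filter (fun c => T.diag (c, b) (a, y)) =
      (Finset.univ.filter (fun c => G.Adj a c)).filter (fun c => ¬ T.diag (a, b) (c, y)) := by
    ext c
    simp only [Finset.mem_filter, Finset.mem_univ, true_and]
    exact T.vert_key hby c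
  rw [h1, h2]
  exact Finset.sum_filter_add_sum_filter_not _ _ f

lemma adj_filter_horiz {a x : VG} {b : VH} (hax : G.Adj a x) :
    Finset.univ.filter (fun c : VH => T.Adj (a, b) (x, c)) =
      insert b (Finset.univ.filter (fun c => T.diag (a, b) (x, c))) := by
  ext c
  simp only [Finset.mem_filter, Finset.mem_univ, true_and, Finset.mem_insert]
  simp only [TriProd.Adj]
  constructor
  · rintro (⟨h1, _⟩ | ⟨h1, _⟩ | h)
    · exact Or.inl h1.symm
    · exact absurd h1 hax.ne
    · exact Or.inr h
  · rintro (rfl | h)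
    · exact Or.inl ⟨rfl, hax⟩
    · exact Or.inr (Or.inr h)

lemma adj_filter_vert {a : VG} {b y : VH} (hby : H.Adj b y) :
    Finset.univ.filter (fun c : VG => T.Adj (a, b) (c, y)) =
      insert a (Finset.univ.filter (fun c => T.diag (a, b) (c, y))) := by
  ext c
  simp only [Finset.mem_filter, Finset.mem_univ, true_and, Finset.mem_insert]
  simp only [TriProd.Adj]
  constructor
  · rintro (⟨h1, _⟩ | ⟨h1, _⟩ | h)
    · exact absurd h1 hby.ne
    · exact Or.inl h1.symm
    · exact Or.inr h
  · rintro (rfl | h)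
    · exact Or.inr (Or.inl ⟨rfl, hby⟩)
    · exact Or.inr (Or.inr h)

lemma notmem_diag_filter_horiz {a x : VG} {b : VH} :
    b ∉ Finset.univ.filter (fun c => T.diag (a, b) (x, c)) := by
  simp only [Finset.mem_filter, Finset.mem_univ, true_and]
  exact fun h => T.diag_snd_ne h rfl

lemma notmem_diag_filter_vert {a : VG} {b y : VH} :
    a ∉ Finset.univ.filter (fun c => T.diag (a, b) (c, y)) := by
  simp only [Finset.mem_filter, Finset.mem_univ, true_and]
  exact fun h => T.diag_fst_ne h rfl

end TriProd
end Aux3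

section Aux4

lemma exists_adj_of_connected {V : Type*} {G' : SimpleGraph V} (hc : G'.Connected)
    {v t : V} (h : v ≠ t) : ∃ u, G'.Adj v u := by
  obtain ⟨p⟩ := hc.preconnected v t
  cases p with
  | nil => exact absurd rfl h
  | cons hadj q => exact ⟨_, hadj⟩

lemma degree_pos_of_connected {V : Type*} [Fintype V] {G' : SimpleGraph V} (hc : G'.Connected)
    (he : ∃ a a', G'.Adj a a') (v : V) :
    0 < (Finset.univ.filter (fun u => G'.Adj v u)).card := by
  obtain ⟨a, a', haa⟩ := he
  have hne : v ≠ a ∨ v ≠ a' := by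
    by_contra hcon
    push_neg at hcon
    exact haa.ne (hcon.1.symm.trans hcon.2)
  have : ∃ u, G'.Adj v u := by
    rcases hne with h | h
    · exact exists_adj_of_connected hc h
    · exact exists_adj_of_connected hc h
  obtain ⟨u, hu⟩ := this
  exact Finset.card_pos.mpr ⟨u, by simp [hu]⟩

variable {VG VH : Type*} {G : SimpleGraph VG} {H : SimpleGraph VH}

lemma TriProd.adj_symm (T : TriProd G H) {u v : VG × VH} (h : T.Adj u v) : T.Adj v u := by
  rcases h with ⟨h1, h2⟩ | ⟨h1, h2⟩ | h
  · exact Or.inl ⟨h1.symm, h2.symm⟩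
  · exact Or.inr (Or.inl ⟨h1.symm, h2.symm⟩)
  · exact Or.inr (Or.inr (T.diag_symm _ _ h))

end Aux4

/-- The all-ones divisor on the triangulated product `Δ` is ℚ-Cartier
if and only if for every vertex `(a,b)` of `Δ` the number of edges of `Δ` from `(a,b)`
into the column `{x} × V(H)` is the same for every neighbour `x` of `a` in `G`, and the
number of edges of `Δ` from `(a,b)` into the row `V(G) × {y}` is the same for every
neighbour `y` of `b` in `H`. -/
theorem all_ones_qcartier_iff {VG VH : Type*} [Fintype VG] [Fintype VH]
    (G : SimpleGraph VG) (H : SimpleGraph VH)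
    (hG : G.Connected) (hH : H.Connected)
    (hGe : ∃ a a', G.Adj a a') (hHe : ∃ b b', H.Adj b b')
    (T : TriProd G H) :
    T.QCartier (fun _ _ => (1 : ℤ)) ↔
      ∀ a : VG, ∀ b : VH,
        (∀ x x' : VG, G.Adj a x → G.Adj a x' →
          (Finset.univ.filter (fun c : VH => T.Adj (a, b) (x, c))).card =
          (Finset.univ.filter (fun c : VH => T.Adj (a, b) (x', c))).card) ∧
        (∀ y y' : VH, H.Adj b y → H.Adj b y' →
          (Finset.univ.filter (fun c : VG => T.Adj (a, b) (c, y))).card =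
          (Finset.univ.filter (fun c : VG => T.Adj (a, b) (c, y'))).card) := by
  constructor
  · -- QCartier → balanced counts
    rintro ⟨m, hm, hC⟩ a b
    obtain ⟨φ, hφ⟩ := hC (a, b)
    have hφ' : ∀ u v, T.Adj u v → ((a, b) = u ∨ (a, b) = v) → m = T.Div φ u v := by
      intro u v h1 h2
      simpa using hφ u v h1 h2
    -- column computation
    have colkey : ∀ x : VG, G.Adj a x →
        m * ((Finset.univ.filter (fun c : VH => T.Adj (a, b) (x, c))).card : ℤ) =
          (∑ c ∈ Finset.univ.filter (fun c => H.Adj b c), φ (a, c)) -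
            ((Finset.univ.filter (fun c => H.Adj b c)).card : ℤ) * φ (a, b) := by
      intro x hax
      have E1 : m = (∑ c ∈ Finset.univ.filter (fun c => T.diag (a, b) (x, c)), φ (x, c)) +
          (∑ c ∈ Finset.univ.filter (fun c => T.diag (a, c) (x, b)), φ (a, c)) -
          ((Finset.univ.filter (fun c => T.diag (a, c) (x, b))).card : ℤ) * φ (a, b) -
          ((Finset.univ.filter (fun c => T.diag (a, b) (x, c))).card : ℤ) * φ (x, b) :=
        (hφ' (a, b) (x, b) (Or.inl ⟨rfl, hax⟩) (Or.inl rfl)).trans (T.Div_horiz_edge hax φ)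
      have E2 : ((Finset.univ.filter (fun c => T.diag (a, b) (x, c))).card : ℤ) * m =
          ((Finset.univ.filter (fun c => T.diag (a, b) (x, c))).card : ℤ) * φ (x, b) +
          (∑ c ∈ Finset.univ.filter (fun c => T.diag (a, b) (x, c)), φ (a, c)) -
          ((Finset.univ.filter (fun c => T.diag (a, b) (x, c))).card : ℤ) * φ (a, b) -
          (∑ c ∈ Finset.univ.filter (fun c => T.diag (a, b) (x, c)), φ (x, c)) := by
        have e : ∑ _c ∈ Finset.univ.filter (fun c => T.diag (a, b) (x, c)), m =
            ∑ c ∈ Finset.univ.filter (fun c => T.diag (a, b) (x, c)),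
              (φ (x, b) + φ (a, c) - φ (a, b) - φ (x, c)) := by
          refine Finset.sum_congr rfl fun c hc => ?_
          have hd : T.diag (a, b) (x, c) := (Finset.mem_filter.mp hc).2
          exact (hφ' (a, b) (x, c) (Or.inr (Or.inr hd)) (Or.inl rfl)).trans
            (T.Div_diag_edge hd φ)
        rw [Finset.sum_const, nsmul_eq_mul] at e
        rw [e]
        rw [Finset.sum_sub_distrib, Finset.sum_sub_distrib, Finset.sum_add_distrib,
          Finset.sum_const, Finset.sum_const, nsmul_eq_mul, nsmul_eq_mul]
        all_goals ring
      have E3 : (∑ c ∈ Finset.univ.filter (fun c => T.diag (a, b) (x, c)), φ (a, c)) +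
          (∑ c ∈ Finset.univ.filter (fun c => T.diag (a, c) (x, b)), φ (a, c)) =
          ∑ c ∈ Finset.univ.filter (fun c => H.Adj b c), φ (a, c) :=
        T.sum_split_horiz hax _
      have E4 : ((Finset.univ.filter (fun c => T.diag (a, b) (x, c))).card : ℤ) +
          ((Finset.univ.filter (fun c => T.diag (a, c) (x, b))).card : ℤ) =
          ((Finset.univ.filter (fun c => H.Adj b c)).card : ℤ) := by
        have := T.sum_split_horiz (b := b) hax (fun _ => (1 : ℤ))
        simpa using this
      have E5 : ((Finset.univ.filter (fun c : VH => T.Adj (a, b) (x, c))).card : ℤ) =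
          ((Finset.univ.filter (fun c => T.diag (a, b) (x, c))).card : ℤ) + 1 := by
        rw [T.adj_filter_horiz hax, Finset.card_insert_of_notMem T.notmem_diag_filter_horiz]
        omega
      rw [E5]
      linear_combination E1 + E2 + E3 - φ (a, b) * E4
    -- row computation
    have rowkey : ∀ y : VH, H.Adj b y →
        m * ((Finset.univ.filter (fun c : VG => T.Adj (a, b) (c, y))).card : ℤ) =
          (∑ c ∈ Finset.univ.filter (fun c => G.Adj a c), φ (c, b)) -
            ((Finset.univ.filter (fun c => G.Adj a c)).card : ℤ) * φ (a, b) := by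
      intro y hby
      have E1 : m = (∑ c ∈ Finset.univ.filter (fun c => T.diag (a, b) (c, y)), φ (c, y)) +
          (∑ c ∈ Finset.univ.filter (fun c => T.diag (c, b) (a, y)), φ (c, b)) -
          ((Finset.univ.filter (fun c => T.diag (c, b) (a, y))).card : ℤ) * φ (a, b) -
          ((Finset.univ.filter (fun c => T.diag (a, b) (c, y))).card : ℤ) * φ (a, y) :=
        (hφ' (a, b) (a, y) (Or.inr (Or.inl ⟨rfl, hby⟩)) (Or.inl rfl)).trans
          (T.Div_vert_edge hby φ)
      have E2 : ((Finset.univ.filter (fun c => T.diag (a, b) (c, y))).card : ℤ) * m =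
          ((Finset.univ.filter (fun c => T.diag (a, b) (c, y))).card : ℤ) * φ (a, y) +
          (∑ c ∈ Finset.univ.filter (fun c => T.diag (a, b) (c, y)), φ (c, b)) -
          ((Finset.univ.filter (fun c => T.diag (a, b) (c, y))).card : ℤ) * φ (a, b) -
          (∑ c ∈ Finset.univ.filter (fun c => T.diag (a, b) (c, y)), φ (c, y)) := by
        have e : ∑ _c ∈ Finset.univ.filter (fun c => T.diag (a, b) (c, y)), m =
            ∑ c ∈ Finset.univ.filter (fun c => T.diag (a, b) (c, y)),
              (φ (c, b) + φ (a, y) - φ (a, b) - φ (c, y)) := by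
          refine Finset.sum_congr rfl fun c hc => ?_
          have hd : T.diag (a, b) (c, y) := (Finset.mem_filter.mp hc).2
          exact (hφ' (a, b) (c, y) (Or.inr (Or.inr hd)) (Or.inl rfl)).trans
            (T.Div_diag_edge hd φ)
        rw [Finset.sum_const, nsmul_eq_mul] at e
        rw [e]
        rw [Finset.sum_sub_distrib, Finset.sum_sub_distrib, Finset.sum_add_distrib,
          Finset.sum_const, Finset.sum_const, nsmul_eq_mul, nsmul_eq_mul]
        all_goals ring
      have E3 : (∑ c ∈ Finset.univ.filter (fun c => T.diag (a, b) (c, y)), φ (c, b)) +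
          (∑ c ∈ Finset.univ.filter (fun c => T.diag (c, b) (a, y)), φ (c, b)) =
          ∑ c ∈ Finset.univ.filter (fun c => G.Adj a c), φ (c, b) :=
        T.sum_split_vert hby _
      have E4 : ((Finset.univ.filter (fun c => T.diag (a, b) (c, y))).card : ℤ) +
          ((Finset.univ.filter (fun c => T.diag (c, b) (a, y))).card : ℤ) =
          ((Finset.univ.filter (fun c => G.Adj a c)).card : ℤ) := by
        have := T.sum_split_vert (a := a) hby (fun _ => (1 : ℤ))
        simpa using this
      have E5 : ((Finset.univ.filter (fun c : VG => T.Adj (a, b) (c, y))).card : ℤ) =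
          ((Finset.univ.filter (fun c => T.diag (a, b) (c, y))).card : ℤ) + 1 := by
        rw [T.adj_filter_vert hby, Finset.card_insert_of_notMem T.notmem_diag_filter_vert]
        omega
      rw [E5]
      linear_combination E1 + E2 + E3 - φ (a, b) * E4
    constructor
    · intro x x' hax hax'
      have h := (colkey x hax).trans (colkey x' hax').symm
      have := mul_left_cancel₀ hm h
      exact_mod_cast this
    · intro y y' hby hby'
      have h := (rowkey y hby).trans (rowkey y' hby').symm
      have := mul_left_cancel₀ hm h
      exact_mod_cast this
  · -- balanced counts → QCartier
    intro hbal
    refine ⟨((Nat.factorial (Fintype.card VG) * Nat.factorial (Fintype.card VH) : ℕ) : ℤ),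
      by positivity, ?_⟩
    set m : ℤ := ((Nat.factorial (Fintype.card VG) * Nat.factorial (Fintype.card VH) : ℕ) : ℤ)
      with hmdef
    rintro ⟨a, b⟩
    -- degrees
    have hdgpos := degree_pos_of_connected hG hGe a
    have hdhpos := degree_pos_of_connected hH hHe b
    have hdvdg : ((Finset.univ.filter (fun u => G.Adj a u)).card : ℤ) ∣ m := by
      rw [hmdef]
      exact_mod_cast Dvd.dvd.mul_right
        (Nat.dvd_factorial hdgpos (le_trans (Finset.card_filter_le _ _) (le_of_eq (Finset.card_univ))))
        (Nat.factorial (Fintype.card VH))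
    have hdvdh : ((Finset.univ.filter (fun u => H.Adj b u)).card : ℤ) ∣ m := by
      rw [hmdef]
      exact_mod_cast Dvd.dvd.mul_left
        (Nat.dvd_factorial hdhpos (le_trans (Finset.card_filter_le _ _) (le_of_eq (Finset.card_univ))))
        (Nat.factorial (Fintype.card VG))
    obtain ⟨k, hk⟩ := hdvdh
    obtain ⟨l, hl⟩ := hdvdg
    -- choose reference neighbours
    obtain ⟨x0, hx0⟩ : ∃ x, G.Adj a x := Finset.card_pos.mp hdgpos |>.imp fun x hx =>
      (Finset.mem_filter.mp hx).2
    obtain ⟨y0, hy0⟩ : ∃ y, H.Adj b y := Finset.card_pos.mp hdhpos |>.imp fun y hy =>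
      (Finset.mem_filter.mp hy).2
    set K : ℕ := (Finset.univ.filter (fun c => T.diag (a, b) (x0, c))).card with hKdef
    set L : ℕ := (Finset.univ.filter (fun c => T.diag (a, b) (c, y0))).card with hLdef
    have hKall : ∀ x : VG, G.Adj a x →
        (Finset.univ.filter (fun c => T.diag (a, b) (x, c))).card = K := by
      intro x hax
      have h := (hbal a b).1 x x0 hax hx0
      rw [T.adj_filter_horiz hax, T.adj_filter_horiz hx0,
        Finset.card_insert_of_notMem T.notmem_diag_filter_horiz,
        Finset.card_insert_of_notMem T.notmem_diag_filter_horiz] at h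
      omega
    have hLall : ∀ y : VH, H.Adj b y →
        (Finset.univ.filter (fun c => T.diag (a, b) (c, y))).card = L := by
      intro y hby
      have h := (hbal a b).2 y y0 hby hy0
      rw [T.adj_filter_vert hby, T.adj_filter_vert hy0,
        Finset.card_insert_of_notMem T.notmem_diag_filter_vert,
        Finset.card_insert_of_notMem T.notmem_diag_filter_vert] at h
      omega
    set vv : ℤ := k * ((K : ℤ) + 1) with hvvdef
    set hh : ℤ := l * ((L : ℤ) + 1) with hhhdef
    set dd : ℤ := hh + vv - m with hdddef
    set φ : VG × VH → ℤ := fun p =>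
      if p = (a, b) then 0 else if p.1 = a then vv else if p.2 = b then hh else dd with hφdef
    have hφ0 : φ (a, b) = 0 := by simp [hφdef]
    have hφh : ∀ x : VG, x ≠ a → φ (x, b) = hh := by
      intro x hx
      simp [hφdef, Prod.ext_iff, hx]
    have hφv : ∀ c : VH, c ≠ b → φ (a, c) = vv := by
      intro c hc
      simp [hφdef, Prod.ext_iff, hc]
    have hφd : ∀ (x : VG) (c : VH), x ≠ a → c ≠ b → φ (x, c) = dd := by
      intro x c hx hc
      simp [hφdef, Prod.ext_iff, hx, hc]
    refine ⟨φ, ?_⟩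
    have main : ∀ v : VG × VH, T.Adj (a, b) v → m = T.Div φ (a, b) v := by
      rintro ⟨xv, cv⟩ hadj
      rcases hadj with ⟨h1, h2⟩ | ⟨h1, h2⟩ | hd
      · -- horizontal
        simp only at h1 h2
        subst h1
        rw [T.Div_horiz_edge h2 φ]
        have hxa : xv ≠ a := h2.ne'
        have s1 : ∑ c ∈ Finset.univ.filter (fun c => T.diag (a, b) (xv, c)), φ (xv, c) =
            ((Finset.univ.filter (fun c => T.diag (a, b) (xv, c))).card : ℤ) * dd := by
          rw [Finset.sum_congr rfl fun c hc =>
            hφd xv c hxa ((T.diag_snd_ne (Finset.mem_filter.mp hc).2).symm)]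
          rw [Finset.sum_const, nsmul_eq_mul]
        have s2 : ∑ c ∈ Finset.univ.filter (fun c => T.diag (a, c) (xv, b)), φ (a, c) =
            ((Finset.univ.filter (fun c => T.diag (a, c) (xv, b))).card : ℤ) * vv := by
          rw [Finset.sum_congr rfl fun c hc =>
            hφv c (T.diag_snd_ne (Finset.mem_filter.mp hc).2)]
          rw [Finset.sum_const, nsmul_eq_mul]
        have hcard : ((Finset.univ.filter (fun c => T.diag (a, b) (xv, c))).card : ℤ) +
            ((Finset.univ.filter (fun c => T.diag (a, c) (xv, b))).card : ℤ) =
            ((Finset.univ.filter (fun c => H.Adj b c)).card : ℤ) := by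
          have := T.sum_split_horiz (b := b) h2 (fun _ => (1 : ℤ))
          simpa using this
        have hKx : ((Finset.univ.filter (fun c => T.diag (a, b) (xv, c))).card : ℤ) = (K : ℤ) := by
          exact_mod_cast hKall xv h2
        rw [s1, s2, hφ0, hφh xv hxa, hKx]
        rw [hKx] at hcard
        rw [hdddef, hvvdef]
        linear_combination ((K : ℤ) + 1) * hk - k * ((K : ℤ) + 1) * hcard
      · -- vertical
        simp only at h1 h2
        subst h1
        rw [T.Div_vert_edge h2 φ]
        have hyb : cv ≠ b := h2.ne'
        have s1 : ∑ c ∈ Finset.univ.filter (fun c => T.diag (a, b) (c, cv)), φ (c, cv) =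
            ((Finset.univ.filter (fun c => T.diag (a, b) (c, cv))).card : ℤ) * dd := by
          rw [Finset.sum_congr rfl fun c hc =>
            hφd c cv ((T.diag_fst_ne (Finset.mem_filter.mp hc).2).symm) hyb]
          rw [Finset.sum_const, nsmul_eq_mul]
        have s2 : ∑ c ∈ Finset.univ.filter (fun c => T.diag (c, b) (a, cv)), φ (c, b) =
            ((Finset.univ.filter (fun c => T.diag (c, b) (a, cv))).card : ℤ) * hh := by
          rw [Finset.sum_congr rfl fun c hc =>
            hφh c (T.diag_fst_ne (Finset.mem_filter.mp hc).2)]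
          rw [Finset.sum_const, nsmul_eq_mul]
        have hcard : ((Finset.univ.filter (fun c => T.diag (a, b) (c, cv))).card : ℤ) +
            ((Finset.univ.filter (fun c => T.diag (c, b) (a, cv))).card : ℤ) =
            ((Finset.univ.filter (fun c => G.Adj a c)).card : ℤ) := by
          have := T.sum_split_vert (a := a) h2 (fun _ => (1 : ℤ))
          simpa using this
        have hLy : ((Finset.univ.filter (fun c => T.diag (a, b) (c, cv))).card : ℤ) = (L : ℤ) := by
          exact_mod_cast hLall cv h2
        rw [s1, s2, hφ0, hφv cv hyb, hLy]
        rw [hLy] at hcard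
        rw [hdddef, hhhdef]
        linear_combination ((L : ℤ) + 1) * hl - l * ((L : ℤ) + 1) * hcard
      · -- diagonal
        rw [T.Div_diag_edge hd φ]
        have hxa : xv ≠ a := (T.diag_fst_ne hd).symm
        have hcb : cv ≠ b := (T.diag_snd_ne hd).symm
        rw [hφ0, hφh xv hxa, hφv cv hcb, hφd xv cv hxa hcb, hdddef]
        ring
    intro u v huv hc
    rcases hc with rfl | rfl
    · simpa using main v huv
    · rw [T.Div_comm]
      simpa using main u (T.adj_symm huv)
end

section
/- Let G be a finite connected simple graph with at least one edge, let H = K₂ be the complete graph on two vertices w₁, w₂, and let Δ be a triangulated product of G and H. Let D be a Cartier divisor on Δ, and let v₀, v₁, …, v_{k−1}, v_k = v₀ be a cycle in G (consecutive vertices adjacent, indices taken modulo k). Then Σ_{i=0}^{k−1} D({(v_i,w₂),(v_{i−1},w₁)}) = Σ_{i=0}^{k−1} D({(v_i,w₂),(v_{i+1},w₁)}), where by convention D(p) = 0 whenever p is not an edge of Δ. -/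
open scoped Classical
open Finset

section Helpers

variable {VG : Type*} {G : SimpleGraph VG} (T : TriProd G (⊤ : SimpleGraph Bool))

lemma repr_top {a a' : VG} (hd : T.diag (a, false) (a', true))
    {w : VG × Bool} {p p' : VG} {b b' : Bool}
    (hdg : T.diag (p, b) (p', b'))
    (hs : ∀ x : VG × Bool, (x = (a, true) ∨ x = (a', true) ∨ x = w) ↔
        (x = (p, b) ∨ x = (p', b') ∨ x = (p', b))) :
    p = a' ∧ b = true ∧ p' = a ∧ b' = false ∧ w = ((a, false) : VG × Bool) := by
  obtain ⟨hGpp', hBbb'⟩ := T.diag_adj _ _ _ _ hdg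
  have hpne : p ≠ p' := hGpp'.ne
  have hbne : b ≠ b' := hBbb'.ne
  have hane : a ≠ a' := (T.diag_adj _ _ _ _ hd).1.ne
  have hnd : ¬ T.diag (a, true) (a', false) := by
    rcases T.diag_choice a a' false true (T.diag_adj _ _ _ _ hd).1 (by simp) with ⟨_, h⟩ | ⟨h, _⟩
    · exact h
    · exact absurd hd h
  have hu := (hs (a, true)).mp (Or.inl rfl)
  have hv := (hs (a', true)).mp (Or.inr (Or.inl rfl))
  have hw' := (hs (p', b')).mpr (Or.inr (Or.inl rfl))
  simp only [Prod.mk.injEq] at hu hv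
  rcases hu with ⟨hp, hb⟩ | ⟨hp, hb⟩ | ⟨hp, hb⟩
  · -- p = a, b = true
    subst hp; subst hb
    rcases hv with ⟨hq, _⟩ | ⟨hq, hc⟩ | ⟨hq, hc⟩
    · exact absurd hq.symm hane
    · exact absurd hc hbne
    · have hb'f : b' = false := by
        cases b' with
        | false => rfl
        | true => exact absurd rfl hbne
      subst hb'f
      exact absurd (hq ▸ hdg) hnd
  · -- p' = a, b' = true ; impossible
    subst hp; subst hb
    rcases hv with ⟨hq, hc⟩ | ⟨hq, _⟩ | ⟨hq, hc⟩
    · exact absurd hc hbne.symm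
    · exact absurd hq.symm hane
    · exact absurd hq.symm hane
  · -- p' = a, b = true
    subst hp; subst hb
    rcases hv with ⟨hq, _⟩ | ⟨hq, _⟩ | ⟨hq, _⟩
    · -- p = a'
      subst hq
      have hb'f : b' = false := by
        cases b' with
        | false => rfl
        | true => exact absurd rfl hbne
      subst hb'f
      refine ⟨rfl, rfl, rfl, rfl, ?_⟩
      simp only [Prod.mk.injEq] at hw'
      rcases hw' with ⟨_, h⟩ | ⟨h, _⟩ | h
      · exact absurd h (by simp)
      · exact absurd h hane
      · exact h.symm
    · exact absurd hq.symm hane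
    · exact absurd hq.symm hane

lemma repr_diag {a a' : VG} (hd : T.diag (a, false) (a', true))
    {w : VG × Bool} {p p' : VG} {b b' : Bool}
    (hdg : T.diag (p, b) (p', b'))
    (hs : ∀ x : VG × Bool, (x = (a, false) ∨ x = (a', true) ∨ x = w) ↔
        (x = (p, b) ∨ x = (p', b') ∨ x = (p', b))) :
    (p = a ∧ b = false ∧ p' = a' ∧ b' = true ∧ w = ((a', false) : VG × Bool)) ∨
    (p = a' ∧ b = true ∧ p' = a ∧ b' = false ∧ w = ((a, true) : VG × Bool)) := by
  obtain ⟨hGpp', hBbb'⟩ := T.diag_adj _ _ _ _ hdg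
  have hpne : p ≠ p' := hGpp'.ne
  have hbne : b ≠ b' := hBbb'.ne
  have hane : a ≠ a' := (T.diag_adj _ _ _ _ hd).1.ne
  have hu := (hs (a, false)).mp (Or.inl rfl)
  have hv := (hs (a', true)).mp (Or.inr (Or.inl rfl))
  have hw' := (hs (p', b)).mpr (Or.inr (Or.inr rfl))
  simp only [Prod.mk.injEq] at hu hv
  rcases hu with ⟨hp, hb⟩ | ⟨hp, hb⟩ | ⟨hp, hb⟩
  · -- p = a, b = false
    subst hp; subst hb
    rcases hv with ⟨hq, hc⟩ | ⟨hq, hc⟩ | ⟨hq, hc⟩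
    · exact absurd hc (by simp)
    · -- p' = a', b' = true
      subst hq; subst hc
      refine Or.inl ⟨rfl, rfl, rfl, rfl, ?_⟩
      simp only [Prod.mk.injEq] at hw'
      rcases hw' with ⟨h, _⟩ | ⟨_, h⟩ | h
      · exact absurd h hane.symm
      · exact absurd h (by simp)
      · exact h.symm
    · exact absurd hc (by simp)
  · -- p' = a, b' = false
    subst hp; subst hb
    rcases hv with ⟨hq, hc⟩ | ⟨hq, hc⟩ | ⟨hq, hc⟩
    · -- p = a', b = true
      subst hq; subst hc
      refine Or.inr ⟨rfl, rfl, rfl, rfl, ?_⟩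
      simp only [Prod.mk.injEq] at hw'
      rcases hw' with ⟨_, h⟩ | ⟨h, _⟩ | h
      · exact absurd h (by simp)
      · exact absurd h hane
      · exact h.symm
    · exact absurd hc (by simp)
    · exact absurd hq.symm hane
  · -- p' = a, b = false
    subst hp; subst hb
    rcases hv with ⟨hq, hc⟩ | ⟨hq, hc⟩ | ⟨hq, hc⟩
    · exact absurd hc (by simp)
    · exact absurd hq.symm hane
    · exact absurd hq.symm hane

lemma face_top_iff {a a' : VG} (hd : T.diag (a, false) (a', true)) (w : VG × Bool) :
    T.IsFace (a, true) (a', true) w ↔ w = ((a, false) : VG × Bool) := by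
  constructor
  · rintro ⟨p, p', c, c', hdg, hs⟩
    have hs' : ∀ x : VG × Bool, (x = ((a, true) : VG × Bool) ∨ x = (a', true) ∨ x = w) ↔
        (x = (p, c) ∨ x = (p', c') ∨ x = (p', c)) := by
      intro x
      have := Finset.ext_iff.mp hs x
      simpa using this
    exact (repr_top T hd hdg hs').2.2.2.2
  · rintro rfl
    refine ⟨a', a, true, false, T.diag_symm _ _ hd, ?_⟩
    ext x
    simp only [Finset.mem_insert, Finset.mem_singleton]
    tauto

lemma face_diag_iff {a a' : VG} (hd : T.diag (a, false) (a', true)) (w : VG × Bool) :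
    T.IsFace (a, false) (a', true) w ↔
      w = ((a', false) : VG × Bool) ∨ w = ((a, true) : VG × Bool) := by
  constructor
  · rintro ⟨p, p', c, c', hdg, hs⟩
    have hs' : ∀ x : VG × Bool, (x = ((a, false) : VG × Bool) ∨ x = (a', true) ∨ x = w) ↔
        (x = (p, c) ∨ x = (p', c') ∨ x = (p', c)) := by
      intro x
      have := Finset.ext_iff.mp hs x
      simpa using this
    rcases repr_diag T hd hdg hs' with ⟨_, _, _, _, hw⟩ | ⟨_, _, _, _, hw⟩
    · exact Or.inl hw
    · exact Or.inr hw
  · rintro (rfl | rfl)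
    · exact ⟨a, a', false, true, hd, rfl⟩
    · refine ⟨a', a, true, false, T.diag_symm _ _ hd, ?_⟩
      ext x
      simp only [Finset.mem_insert, Finset.mem_singleton]
      tauto

lemma avoid_top_u_iff {a a' : VG} (hd : T.diag (a, false) (a', true)) (w : VG × Bool) :
    T.IsFaceAvoiding (a, true) (a', true) w (a, true) ↔ w = ((a, false) : VG × Bool) := by
  have hane : a ≠ a' := (T.diag_adj _ _ _ _ hd).1.ne
  constructor
  · rintro ⟨p, p', c, c', hdg, hs, _, _⟩
    have hs' : ∀ x : VG × Bool, (x = ((a, true) : VG × Bool) ∨ x = (a', true) ∨ x = w) ↔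
        (x = (p, c) ∨ x = (p', c') ∨ x = (p', c)) := by
      intro x
      have := Finset.ext_iff.mp hs x
      simpa using this
    exact (repr_top T hd hdg hs').2.2.2.2
  · rintro rfl
    refine ⟨a', a, true, false, T.diag_symm _ _ hd, ?_, ?_, ?_⟩
    · ext x
      simp only [Finset.mem_insert, Finset.mem_singleton]
      tauto
    · simp [Prod.ext_iff, hane]
    · simp [Prod.ext_iff]

lemma avoid_top_v {a a' : VG} (hd : T.diag (a, false) (a', true)) (w : VG × Bool) :
    ¬ T.IsFaceAvoiding (a, true) (a', true) w (a', true) := by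
  rintro ⟨p, p', c, c', hdg, hs, hx1, hx2⟩
  have hs' : ∀ x : VG × Bool, (x = ((a, true) : VG × Bool) ∨ x = (a', true) ∨ x = w) ↔
      (x = (p, c) ∨ x = (p', c') ∨ x = (p', c)) := by
    intro x
    have := Finset.ext_iff.mp hs x
    simpa using this
  obtain ⟨hp, hc, _, _, _⟩ := repr_top T hd hdg hs' 
  subst hp; subst hc
  exact hx1 rfl

section DivComp

variable [Fintype VG]

lemma div_top {a a' : VG} (hd : T.diag (a, false) (a', true)) (φ : VG × Bool → ℤ) :
    T.Div φ (a, true) (a', true) = φ (a, false) - φ (a, true) := by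
  have hndiag : ¬ T.diag (a, true) (a', true) := fun h =>
    ((T.diag_adj _ _ _ _ h).2).ne rfl
  have hface : Finset.univ.filter (fun w => T.IsFace (a, true) (a', true) w)
      = {((a, false) : VG × Bool)} := by
    ext w; simp [face_top_iff T hd]
  have ha1 : T.alpha (a, true) (a', true) (a, true) = 1 := by
    rw [TriProd.alpha, if_pos (Or.inl rfl), if_neg hndiag]
    have h2 : Finset.univ.filter (fun w => T.IsFaceAvoiding (a, true) (a', true) w (a, true))
        = {((a, false) : VG × Bool)} := by
      ext w; simp [avoid_top_u_iff T hd]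
    rw [h2]; simp
  have ha2 : T.alpha (a, true) (a', true) (a', true) = 0 := by
    rw [TriProd.alpha, if_pos (Or.inr rfl), if_neg hndiag]
    have h2 : Finset.univ.filter (fun w => T.IsFaceAvoiding (a, true) (a', true) w (a', true))
        = (∅ : Finset (VG × Bool)) := by
      ext w; simp [avoid_top_v T hd]
    rw [h2]; simp
  rw [TriProd.Div, hface, ha1, ha2, Finset.sum_singleton]
  ring

lemma div_diag {a a' : VG} (hd : T.diag (a, false) (a', true)) (φ : VG × Bool → ℤ) :
    T.Div φ (a, false) (a', true)
      = (φ (a', false) + φ (a, true)) - (φ (a, false) + φ (a', true)) := by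
  have hane : a ≠ a' := (T.diag_adj _ _ _ _ hd).1.ne
  have hface : Finset.univ.filter (fun w => T.IsFace (a, false) (a', true) w)
      = {((a', false) : VG × Bool), ((a, true) : VG × Bool)} := by
    ext w; simp [face_diag_iff T hd]
  have ha1 : T.alpha (a, false) (a', true) (a, false) = 1 := by
    rw [TriProd.alpha, if_pos (Or.inl rfl), if_pos hd]
  have ha2 : T.alpha (a, false) (a', true) (a', true) = 1 := by
    rw [TriProd.alpha, if_pos (Or.inr rfl), if_pos hd]
  have hpairne : ((a', false) : VG × Bool) ≠ ((a, true) : VG × Bool) := by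
    simp [Prod.ext_iff]
  rw [TriProd.Div, hface, ha1, ha2, Finset.sum_pair hpairne]
  ring

end DivComp

end Helpers
/-- Let `H = K₂` on the vertices `w₁ = false`, `w₂ = true`, `Δ` a
triangulated product of `G` and `K₂`, `D` a Cartier divisor on `Δ`, and
`v₀, …, v_{k−1}, v_k = v₀` a cycle in `G` (consecutive vertices adjacent, indices mod
`k`).  Then `Σ_i D({(v_i,w₂),(v_{i−1},w₁)}) = Σ_i D({(v_i,w₂),(v_{i+1},w₁)})`, with the
convention that `D` is `0` on pairs that are not edges of `Δ`. -/
theorem cycle_diagonal_relation {VG : Type*} [Fintype VG]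
    (G : SimpleGraph VG)
    (hG : G.Connected) (hGe : ∃ a a', G.Adj a a')
    (T : TriProd G (⊤ : SimpleGraph Bool))
    (D : VG × Bool → VG × Bool → ℤ) (hsymm : ∀ u v, D u v = D v u)
    (hD : T.Cartier D)
    (k : ℕ) [NeZero k] (v : ZMod k → VG)
    (hcyc : ∀ i : ZMod k, G.Adj (v i) (v (i + 1))) :
    (∑ i : ZMod k,
        if T.Adj (v i, true) (v (i - 1), false) then D (v i, true) (v (i - 1), false)
        else 0) =
      (∑ i : ZMod k,
        if T.Adj (v i, true) (v (i + 1), false) then D (v i, true) (v (i + 1), false)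
        else 0) := by
  classical
  choose φ hφ using hD
  set A : VG → ℤ := fun c => φ (c, true) (c, true) - φ (c, true) (c, false) with hA
  have key : ∀ a a' : VG, T.diag (a, false) (a', true) →
      D (a, false) (a', true) = A a - A a' := by
    intro a a' hd
    have hadj : G.Adj a a' := (T.diag_adj _ _ _ _ hd).1
    have hadjtop : T.Adj (a, true) (a', true) := Or.inl ⟨rfl, hadj⟩
    have hadjdiag : T.Adj (a, false) (a', true) := Or.inr (Or.inr hd)
    have h1 := (hφ (a, true) (a, true) (a', true) hadjtop (Or.inl rfl)).trans
      (div_top T hd (φ (a, true)))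
    have h2 := (hφ (a', true) (a, true) (a', true) hadjtop (Or.inr rfl)).trans
      (div_top T hd (φ (a', true)))
    have h3 := (hφ (a', true) (a, false) (a', true) hadjdiag (Or.inr rfl)).trans
      (div_diag T hd (φ (a', true)))
    simp only [hA]
    linarith [h1, h2, h3]
  have step : ∀ i : ZMod k,
      ((if T.Adj (v (i + 1), true) (v i, false) then D (v (i + 1), true) (v i, false) else 0)
        - (if T.Adj (v i, true) (v (i + 1), false) then D (v i, true) (v (i + 1), false) else 0))
      = A (v i) - A (v (i + 1)) := by
    intro i
    have hadj : G.Adj (v i) (v (i + 1)) := hcyc i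
    have hne : v i ≠ v (i + 1) := hadj.ne
    rcases T.diag_choice (v i) (v (i + 1)) false true hadj (by simp) with ⟨h1, h2⟩ | ⟨h1, h2⟩
    · have ha1 : T.Adj (v (i + 1), true) (v i, false) :=
        Or.inr (Or.inr (T.diag_symm _ _ h1))
      have hna2 : ¬ T.Adj (v i, true) (v (i + 1), false) := by
        rintro (⟨h, _⟩ | ⟨h, _⟩ | h)
        · simp at h
        · exact hne h
        · exact h2 h
      rw [if_pos ha1, if_neg hna2]
      have := key (v i) (v (i + 1)) h1
      rw [hsymm] at this
      rw [this]
      ring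
    · have hna1 : ¬ T.Adj (v (i + 1), true) (v i, false) := by
        rintro (⟨h, _⟩ | ⟨h, _⟩ | h)
        · simp at h
        · exact hne h.symm
        · exact h1 (T.diag_symm _ _ h)
      have ha2 : T.Adj (v i, true) (v (i + 1), false) := Or.inr (Or.inr h2)
      rw [if_neg hna1, if_pos ha2]
      have := key (v (i + 1)) (v i) (T.diag_symm _ _ h2)
      rw [hsymm] at this
      rw [this]
      ring
  have reL : (∑ i : ZMod k,
        if T.Adj (v i, true) (v (i - 1), false) then D (v i, true) (v (i - 1), false) else 0)
      = ∑ i : ZMod k,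
        (if T.Adj (v (i + 1), true) (v i, false) then D (v (i + 1), true) (v i, false) else 0) := by
    refine (Fintype.sum_bijective (· + (1 : ZMod k)) (Equiv.addRight (1 : ZMod k)).bijective
      _ _ ?_).symm
    intro i
    simp [add_sub_cancel_right]
  have reA : ∑ i : ZMod k, (A (v i) - A (v (i + 1))) = 0 := by
    rw [Finset.sum_sub_distrib, sub_eq_zero]
    exact (Fintype.sum_bijective (· + (1 : ZMod k)) (Equiv.addRight (1 : ZMod k)).bijective
      (fun i => A (v (i + 1))) (fun i => A (v i)) (fun i => rfl)).symm
  rw [reL, ← sub_eq_zero, ← Finset.sum_sub_distrib]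
  rw [Finset.sum_congr rfl (fun i _ => step i)]
  exact reA
end

section
/- For every vertex (a,b) of the triangulated product Δ and every neighbor x of a in G, the sum of α({(a,b),(x,c)}, (a,b)) over all c∈V(H) with {(a,b),(x,c)}∈E(Δ) equals deg_H(b), the degree of b in H; in particular this sum is independent of the choice of neighbor x. -/
open scoped Classical
open Finset

/-- For every vertex `(a,b)` of the triangulated product `Δ` and every
neighbour `x` of `a` in `G`, the sum of `α({(a,b),(x,c)}, (a,b))` over all `c ∈ V(H)`
with `{(a,b),(x,c)}` an edge of `Δ` equals the degree of `b` in `H`; in particular it is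
independent of the choice of `x`. -/
theorem alpha_sum_eq_degree {VG VH : Type*} [Fintype VG] [Fintype VH]
    (G : SimpleGraph VG) (H : SimpleGraph VH)
    (hG : G.Connected) (hH : H.Connected)
    (hGe : ∃ a a', G.Adj a a') (hHe : ∃ b b', H.Adj b b')
    (T : TriProd G H)
    (a x : VG) (b : VH) (hax : G.Adj a x) :
    (∑ c ∈ Finset.univ.filter (fun c : VH => T.Adj (a, b) (x, c)),
        T.alpha (a, b) (x, c) (a, b)) =
      ((Finset.univ.filter (fun c : VH => H.Adj b c)).card : ℤ) := by
  classical
  have hne : a ≠ x := hax.ne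
  set D : Finset VH := Finset.univ.filter (fun c => T.diag (a,b) (x,c)) with hD
  set D' : Finset VH := Finset.univ.filter (fun c => T.diag (x,b) (a,c)) with hD'
  have hadjD : ∀ c, T.diag (a,b) (x,c) → H.Adj b c := fun c h => (T.diag_adj _ _ _ _ h).2
  have hadjD' : ∀ c, T.diag (x,b) (a,c) → H.Adj b c := fun c h => (T.diag_adj _ _ _ _ h).2
  have hbD : b ∉ D := by
    simp only [hD, Finset.mem_filter, Finset.mem_univ, true_and]
    exact fun h => H.loopless.irrefl b (hadjD b h)
  have hnd : ¬ T.diag (a,b) (x,b) := fun h => H.loopless.irrefl b (hadjD b h)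
  have hSet : Finset.univ.filter (fun c : VH => T.Adj (a,b) (x,c)) = insert b D := by
    ext c
    simp only [Finset.mem_filter, Finset.mem_univ, true_and, Finset.mem_insert, hD]
    unfold TriProd.Adj
    constructor
    · rintro (⟨h1, _⟩ | ⟨h1, _⟩ | h)
      · exact Or.inl h1.symm
      · exact absurd h1 hne
      · exact Or.inr h
    · rintro (rfl | h)
      · exact Or.inl ⟨rfl, hax⟩
      · exact Or.inr (Or.inr h)
  rw [hSet, Finset.sum_insert hbD]
  have h1 : ∀ c ∈ D, T.alpha (a,b) (x,c) (a,b) = 1 := by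
    intro c hc
    simp only [hD, Finset.mem_filter, Finset.mem_univ, true_and] at hc
    simp [TriProd.alpha, hc]
  rw [Finset.sum_congr rfl h1, Finset.sum_const, nsmul_eq_mul, mul_one]
  -- characterize the faces avoiding (a,b) that contain the horizontal edge
  have key : ∀ w : VG × VH,
      T.IsFaceAvoiding (a,b) (x,b) w (a,b) ↔ (w = (a, w.2) ∧ T.diag (x,b) (a, w.2)) := by
    intro w
    constructor
    · rintro ⟨A, A', B, B', hdiag, hset, hne1, hne2⟩
      have hH2 : H.Adj B B' := (T.diag_adj _ _ _ _ hdiag).2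
      have hab : (a, b) ∈ ({(A,B), (A',B'), (A',B)} : Finset (VG × VH)) := by
        rw [← hset]; simp
      simp only [Finset.mem_insert, Finset.mem_singleton] at hab
      rcases hab with h | h | h
      · exact absurd h hne1
      · exact absurd h hne2
      · have e1 : a = A' := congrArg Prod.fst h
        have e2 : b = B := congrArg Prod.snd h
        subst e1; subst e2
        have hxb : (x, b) ∈ ({(A,b), (a,B'), (a,b)} : Finset (VG × VH)) := by
          rw [← hset]; simp
        simp only [Finset.mem_insert, Finset.mem_singleton] at hxb
        rcases hxb with h' | h' | h'
        · have e3 : x = A := congrArg Prod.fst h'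
          subst e3
          -- now diag (x,b) (a,B'); show w = (a,B')
          have hw : (a, B') ∈ ({(a,b), (x,b), w} : Finset (VG × VH)) := by
            rw [hset]; simp
          simp only [Finset.mem_insert, Finset.mem_singleton] at hw
          rcases hw with h'' | h'' | h''
          · exact absurd (congrArg Prod.snd h'') hH2.ne.symm
          · exact absurd (congrArg Prod.fst h'') hne
          · subst h''; exact ⟨rfl, hdiag⟩
        · exact absurd (congrArg Prod.fst h').symm hne
        · exact absurd (congrArg Prod.fst h').symm hne
    · rintro ⟨hw, hdiag⟩
      refine ⟨x, a, b, w.2, hdiag, ?_, ?_, ?_⟩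
      · rw [hw]
        ext p
        simp only [Finset.mem_insert, Finset.mem_singleton]
        tauto
      · simp [Prod.ext_iff, hne]
      · have : b ≠ w.2 := (hadjD' _ hdiag).ne
        simp [Prod.ext_iff, this]
  have halpha : T.alpha (a,b) (x,b) (a,b) = (D'.card : ℤ) := by
    rw [TriProd.alpha, if_pos (Or.inl rfl), if_neg hnd]
    congr 1
    have himg : Finset.univ.filter (fun w => T.IsFaceAvoiding (a,b) (x,b) w (a,b))
        = D'.image (fun c => (a, c)) := by
      ext w
      simp only [Finset.mem_filter, Finset.mem_univ, true_and, Finset.mem_image, hD',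
        key]
      constructor
      · rintro ⟨hw, hdiag⟩
        exact ⟨w.2, hdiag, hw.symm⟩
      · rintro ⟨c, hc, rfl⟩
        exact ⟨rfl, hc⟩
    rw [himg, Finset.card_image_of_injective _ (fun c c' h => (Prod.mk.injEq _ _ _ _ ▸ h).2)]
  rw [halpha]
  -- now count: D and D' partition the neighbours of b
  have hunion : D ∪ D' = Finset.univ.filter (fun c => H.Adj b c) := by
    ext c
    simp only [Finset.mem_union, hD, hD', Finset.mem_filter, Finset.mem_univ, true_and]
    constructor
    · rintro (h | h)
      · exact hadjD c h
      · exact hadjD' c h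
    · intro h
      rcases T.diag_choice a x b c hax h with ⟨h1, -⟩ | ⟨-, h2⟩
      · exact Or.inl h1
      · exact Or.inr (T.diag_symm _ _ h2)
  have hdisj : Disjoint D D' := by
    rw [Finset.disjoint_left]
    intro c hc hc'
    simp only [hD, hD', Finset.mem_filter, Finset.mem_univ, true_and] at hc hc'
    rcases T.diag_choice a x b c hax (hadjD c hc) with ⟨-, h2⟩ | ⟨h1, -⟩
    · exact h2 (T.diag_symm _ _ hc')
    · exact h1 hc
  rw [← hunion, Finset.card_union_of_disjoint hdisj]
  push_cast
  ring
end
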